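/- arXiv:2407.00240 — 4 statements merged into one kernel-verified Lean document; each statement's English description precedes it below -/
import Mathlib

section
/- Let f(x) := x³ + x² + x. Then the transformed mean is ν(f) = σii and the transformed covariance satisfies τ(f,f) = σij + 3·σii·σij + 3·σjj·σij + 2·σij² + 9·σii·σjj·σij + 6·σij³. -/
open MeasureTheory Real

lemma int_pow_gauss {b : ℝ} (hb : 0 < b) (n : ℕ) :
    Integrable fun x : ℝ => x ^ n * Real.exp (-b * x ^ 2) := by
  have h : (-1 : ℝ) < n := lt_of_lt_of_le (by norm_num) (Nat.cast_nonneg n)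
  simpa [Real.rpow_natCast] using integrable_rpow_mul_exp_neg_mul_sq hb h

lemma gauss_moment_step {b : ℝ} (hb : 0 < b) (n : ℕ) :
    (∫ x : ℝ, x ^ (n + 2) * exp (-b * x ^ 2)) =
      ((n : ℝ) + 1) / (2 * b) * ∫ x : ℝ, x ^ n * exp (-b * x ^ 2) := by
  have key : (∫ x : ℝ, (((n : ℝ) + 1) * (x ^ n * exp (-b * x ^ 2)) -
      (2 * b) * (x ^ (n + 2) * exp (-b * x ^ 2)))) = 0 := by
    apply integral_eq_zero_of_hasDerivAt_of_integrable
      (f := fun x : ℝ => x ^ (n + 1) * exp (-b * x ^ 2))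
    · intro x
      have h1 : HasDerivAt (fun x : ℝ => x ^ (n + 1)) (((n : ℝ) + 1) * x ^ n) x := by
        simpa using hasDerivAt_pow (n + 1) x
      have h0 : HasDerivAt (fun x : ℝ => -b * x ^ 2) (-b * (2 * x)) x := by
        simpa using (hasDerivAt_pow 2 x).const_mul (-b)
      have h2 : HasDerivAt (fun x : ℝ => exp (-b * x ^ 2))
          (exp (-b * x ^ 2) * (-b * (2 * x))) x := (Real.hasDerivAt_exp _).comp x h0
      exact (h1.mul h2).congr_deriv (by ring)
    · exact ((int_pow_gauss hb n).const_mul _).sub ((int_pow_gauss hb (n + 2)).const_mul _)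
    · exact int_pow_gauss hb (n + 1)
  rw [integral_sub ((int_pow_gauss hb n).const_mul _) ((int_pow_gauss hb (n + 2)).const_mul _),
    integral_const_mul, integral_const_mul, sub_eq_zero] at key
  have hb' : (2 : ℝ) * b ≠ 0 := by positivity
  rw [div_mul_eq_mul_div, eq_div_iff hb']
  linear_combination -key

lemma gauss_J1 {b : ℝ} (hb : 0 < b) : (∫ x : ℝ, x ^ 1 * exp (-b * x ^ 2)) = 0 := by
  apply integral_eq_zero_of_hasDerivAt_of_integrable
    (f := fun x : ℝ => -(1 / (2 * b)) * exp (-b * x ^ 2))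
  · intro x
    have h0 : HasDerivAt (fun x : ℝ => -b * x ^ 2) (-b * (2 * x)) x := by
      simpa using (hasDerivAt_pow 2 x).const_mul (-b)
    have h2 : HasDerivAt (fun x : ℝ => exp (-b * x ^ 2))
        (exp (-b * x ^ 2) * (-b * (2 * x))) x := (Real.hasDerivAt_exp _).comp x h0
    exact (h2.const_mul (-(1 / (2 * b)))).congr_deriv (by field_simp)
  · exact int_pow_gauss hb 1
  · exact (integrable_exp_neg_mul_sq hb).const_mul _

lemma gauss_J0 {b : ℝ} (hb : 0 < b) : (∫ x : ℝ, x ^ 0 * exp (-b * x ^ 2)) = Real.sqrt (π / b) := by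
  simpa using integral_gaussian b

lemma gauss_J2 {b : ℝ} (hb : 0 < b) :
    (∫ x : ℝ, x ^ 2 * exp (-b * x ^ 2)) = 1 / (2 * b) * Real.sqrt (π / b) := by
  have := gauss_moment_step hb 0
  rw [gauss_J0 hb] at this
  simpa using this

lemma gauss_J3 {b : ℝ} (hb : 0 < b) : (∫ x : ℝ, x ^ 3 * exp (-b * x ^ 2)) = 0 := by
  have := gauss_moment_step hb 1
  rw [gauss_J1 hb] at this
  simpa using this

lemma gauss_J4 {b : ℝ} (hb : 0 < b) :
    (∫ x : ℝ, x ^ 4 * exp (-b * x ^ 2)) = 3 / (4 * b ^ 2) * Real.sqrt (π / b) := by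
  have := gauss_moment_step hb 2
  rw [gauss_J2 hb] at this
  rw [show (2:ℕ) + 2 = 4 from rfl] at this
  rw [this]
  field_simp
  ring

lemma gauss_J5 {b : ℝ} (hb : 0 < b) : (∫ x : ℝ, x ^ 5 * exp (-b * x ^ 2)) = 0 := by
  have := gauss_moment_step hb 3
  rw [gauss_J3 hb] at this
  simpa using this

lemma gauss_J6 {b : ℝ} (hb : 0 < b) :
    (∫ x : ℝ, x ^ 6 * exp (-b * x ^ 2)) = 15 / (8 * b ^ 3) * Real.sqrt (π / b) := by
  have := gauss_moment_step hb 4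
  rw [gauss_J4 hb] at this
  rw [show (4:ℕ) + 2 = 6 from rfl] at this
  rw [this]
  field_simp
  ring

lemma exp_form {σ : ℝ} (x : ℝ) : exp (-x ^ 2 / (2 * σ)) = exp (-(1 / (2 * σ)) * x ^ 2) := by
  congr 1
  ring

lemma int_poly6 {σ : ℝ} (hσ : 0 < σ) (c0 c1 c2 c3 c4 c5 c6 : ℝ) :
    Integrable fun x : ℝ =>
      (c0 + c1 * x + c2 * x ^ 2 + c3 * x ^ 3 + c4 * x ^ 4 + c5 * x ^ 5 + c6 * x ^ 6) *
        exp (-x ^ 2 / (2 * σ)) := by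
  have hb : 0 < 1 / (2 * σ) := by positivity
  have : (fun x : ℝ =>
      (c0 + c1 * x + c2 * x ^ 2 + c3 * x ^ 3 + c4 * x ^ 4 + c5 * x ^ 5 + c6 * x ^ 6) *
        exp (-x ^ 2 / (2 * σ))) = fun x : ℝ =>
      c0 * (x ^ 0 * exp (-(1 / (2 * σ)) * x ^ 2)) + c1 * (x ^ 1 * exp (-(1 / (2 * σ)) * x ^ 2)) +
      c2 * (x ^ 2 * exp (-(1 / (2 * σ)) * x ^ 2)) + c3 * (x ^ 3 * exp (-(1 / (2 * σ)) * x ^ 2)) +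
      c4 * (x ^ 4 * exp (-(1 / (2 * σ)) * x ^ 2)) + c5 * (x ^ 5 * exp (-(1 / (2 * σ)) * x ^ 2)) +
      c6 * (x ^ 6 * exp (-(1 / (2 * σ)) * x ^ 2)) := by
    funext x
    rw [exp_form]
    ring
  rw [this]
  exact ((((((((int_pow_gauss hb 0).const_mul c0).add
    ((int_pow_gauss hb 1).const_mul c1)).add
    ((int_pow_gauss hb 2).const_mul c2)).add
    ((int_pow_gauss hb 3).const_mul c3)).add
    ((int_pow_gauss hb 4).const_mul c4)).add
    ((int_pow_gauss hb 5).const_mul c5)).add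
    ((int_pow_gauss hb 6).const_mul c6))

lemma master {σ : ℝ} (hσ : 0 < σ) (c0 c1 c2 c3 c4 c5 c6 : ℝ) :
    (∫ x : ℝ,
      (c0 + c1 * x + c2 * x ^ 2 + c3 * x ^ 3 + c4 * x ^ 4 + c5 * x ^ 5 + c6 * x ^ 6) *
        exp (-x ^ 2 / (2 * σ)))
    = (c0 + c2 * σ + 3 * c4 * σ ^ 2 + 15 * c6 * σ ^ 3) * Real.sqrt (2 * π * σ) := by
  have hb : 0 < 1 / (2 * σ) := by positivity
  have hrep : (fun x : ℝ =>
      (c0 + c1 * x + c2 * x ^ 2 + c3 * x ^ 3 + c4 * x ^ 4 + c5 * x ^ 5 + c6 * x ^ 6) *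
        exp (-x ^ 2 / (2 * σ))) = fun x : ℝ =>
      c0 * (x ^ 0 * exp (-(1 / (2 * σ)) * x ^ 2)) + c1 * (x ^ 1 * exp (-(1 / (2 * σ)) * x ^ 2)) +
      c2 * (x ^ 2 * exp (-(1 / (2 * σ)) * x ^ 2)) + c3 * (x ^ 3 * exp (-(1 / (2 * σ)) * x ^ 2)) +
      c4 * (x ^ 4 * exp (-(1 / (2 * σ)) * x ^ 2)) + c5 * (x ^ 5 * exp (-(1 / (2 * σ)) * x ^ 2)) +
      c6 * (x ^ 6 * exp (-(1 / (2 * σ)) * x ^ 2)) := by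
    funext x
    rw [exp_form]
    ring
  have hi : ∀ k : ℕ, Integrable fun x : ℝ => x ^ k * exp (-(1 / (2 * σ)) * x ^ 2) :=
    fun k => int_pow_gauss hb k
  rw [hrep]
  have T : ∀ k : ℕ, ∀ c : ℝ, Integrable fun x : ℝ => c * (x ^ k * exp (-(1 / (2 * σ)) * x ^ 2)) :=
    fun k c => (hi k).const_mul c
  have I1 : Integrable fun x : ℝ => c0 * (x ^ 0 * exp (-(1 / (2 * σ)) * x ^ 2)) +
      c1 * (x ^ 1 * exp (-(1 / (2 * σ)) * x ^ 2)) := (T 0 c0).add (T 1 c1)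
  have I2 : Integrable fun x : ℝ => c0 * (x ^ 0 * exp (-(1 / (2 * σ)) * x ^ 2)) +
      c1 * (x ^ 1 * exp (-(1 / (2 * σ)) * x ^ 2)) +
      c2 * (x ^ 2 * exp (-(1 / (2 * σ)) * x ^ 2)) := I1.add (T 2 c2)
  have I3 : Integrable fun x : ℝ => c0 * (x ^ 0 * exp (-(1 / (2 * σ)) * x ^ 2)) +
      c1 * (x ^ 1 * exp (-(1 / (2 * σ)) * x ^ 2)) +
      c2 * (x ^ 2 * exp (-(1 / (2 * σ)) * x ^ 2)) +
      c3 * (x ^ 3 * exp (-(1 / (2 * σ)) * x ^ 2)) := I2.add (T 3 c3)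
  have I4 : Integrable fun x : ℝ => c0 * (x ^ 0 * exp (-(1 / (2 * σ)) * x ^ 2)) +
      c1 * (x ^ 1 * exp (-(1 / (2 * σ)) * x ^ 2)) +
      c2 * (x ^ 2 * exp (-(1 / (2 * σ)) * x ^ 2)) +
      c3 * (x ^ 3 * exp (-(1 / (2 * σ)) * x ^ 2)) +
      c4 * (x ^ 4 * exp (-(1 / (2 * σ)) * x ^ 2)) := I3.add (T 4 c4)
  have I5 : Integrable fun x : ℝ => c0 * (x ^ 0 * exp (-(1 / (2 * σ)) * x ^ 2)) +
      c1 * (x ^ 1 * exp (-(1 / (2 * σ)) * x ^ 2)) +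
      c2 * (x ^ 2 * exp (-(1 / (2 * σ)) * x ^ 2)) +
      c3 * (x ^ 3 * exp (-(1 / (2 * σ)) * x ^ 2)) +
      c4 * (x ^ 4 * exp (-(1 / (2 * σ)) * x ^ 2)) +
      c5 * (x ^ 5 * exp (-(1 / (2 * σ)) * x ^ 2)) := I4.add (T 5 c5)
  rw [integral_add I5 (T 6 c6), integral_add I4 (T 5 c5), integral_add I3 (T 4 c4),
    integral_add I2 (T 3 c3), integral_add I1 (T 2 c2), integral_add (T 0 c0) (T 1 c1)]
  simp only [integral_const_mul]
  rw [gauss_J0 hb, gauss_J1 hb, gauss_J2 hb, gauss_J3 hb, gauss_J4 hb, gauss_J5 hb, gauss_J6 hb]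
  have hsq : Real.sqrt (π / (1 / (2 * σ))) = Real.sqrt (2 * π * σ) := by
    congr 1
    field_simp
  rw [hsq]
  have hσ' : σ ≠ 0 := ne_of_gt hσ
  field_simp
  ring


/-- Centered bivariate Gaussian density with covariance entries `σii, σjj, σij`. -/
noncomputable def gaussPDF2 (σii σjj σij : ℝ) (x w : ℝ) : ℝ :=
  (1 / (2 * π * Real.sqrt (σii * σjj - σij ^ 2))) *
    Real.exp (-(σjj * x ^ 2 - 2 * σij * x * w + σii * w ^ 2) / (2 * (σii * σjj - σij ^ 2)))

/-- Centered univariate Gaussian density with variance `σ`. -/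
noncomputable def gaussPDF1 (σ x : ℝ) : ℝ :=
  (1 / Real.sqrt (2 * π * σ)) * Real.exp (-x ^ 2 / (2 * σ))

lemma sqrt_two_pi_pos {σ : ℝ} (hσ : 0 < σ) : 0 < Real.sqrt (2 * π * σ) :=
  Real.sqrt_pos.2 (by positivity)

/-- Factorization of the bivariate density. -/
lemma gaussPDF2_factor (σii σjj σij : ℝ) (hii : 0 < σii)
    (hd : 0 < σii * σjj - σij ^ 2) (x w : ℝ) :
    gaussPDF2 σii σjj σij x w =
      gaussPDF1 σii x * gaussPDF1 ((σii * σjj - σij ^ 2) / σii) (w - σij / σii * x) := by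
  have hii' : σii ≠ 0 := ne_of_gt hii
  have hd' : σii * σjj - σij ^ 2 ≠ 0 := ne_of_gt hd
  have hc : 0 < (σii * σjj - σij ^ 2) / σii := by positivity
  unfold gaussPDF2 gaussPDF1
  have hconst : Real.sqrt (2 * π * σii) * Real.sqrt (2 * π * ((σii * σjj - σij ^ 2) / σii)) =
      2 * π * Real.sqrt (σii * σjj - σij ^ 2) := by
    rw [← Real.sqrt_mul (by positivity)]
    rw [show 2 * π * σii * (2 * π * ((σii * σjj - σij ^ 2) / σii)) =
        (2 * π) ^ 2 * (σii * σjj - σij ^ 2) by field_simp]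
    rw [Real.sqrt_mul (by positivity), Real.sqrt_sq (by positivity)]
  have hexp : Real.exp (-(σjj * x ^ 2 - 2 * σij * x * w + σii * w ^ 2) /
      (2 * (σii * σjj - σij ^ 2))) =
      Real.exp (-x ^ 2 / (2 * σii)) *
        Real.exp (-(w - σij / σii * x) ^ 2 / (2 * ((σii * σjj - σij ^ 2) / σii))) := by
    rw [← Real.exp_add]
    congr 1
    rw [div_add_div _ _ (by positivity) (by positivity), div_eq_div_iff (by positivity) (by positivity)]
    field_simp
    ring
  rw [hexp, ← hconst]
  have h1 : Real.sqrt (2 * π * σii) ≠ 0 := ne_of_gt (sqrt_two_pi_pos hii)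
  have h2 : Real.sqrt (2 * π * ((σii * σjj - σij ^ 2) / σii)) ≠ 0 :=
    ne_of_gt (sqrt_two_pi_pos hc)
  field_simp

/-- The shear `(x, u) ↦ (x, u + m x)` as a measurable equivalence. -/
noncomputable def shearEquiv (m : ℝ) : (ℝ × ℝ) ≃ᵐ (ℝ × ℝ) where
  toFun p := (p.1, p.2 + m * p.1)
  invFun p := (p.1, p.2 - m * p.1)
  left_inv p := by simp
  right_inv p := by simp
  measurable_toFun :=
    measurable_fst.prodMk (measurable_snd.add (measurable_fst.const_mul m))
  measurable_invFun :=
    measurable_fst.prodMk (measurable_snd.sub (measurable_fst.const_mul m))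

lemma shear_measurePreserving (m : ℝ) :
    MeasurePreserving (shearEquiv m) (volume : Measure (ℝ × ℝ)) volume := by
  rw [Measure.volume_eq_prod]
  exact (MeasurePreserving.id volume).skew_product
    (g := fun a c => c + m * a)
    (measurable_snd.add (measurable_fst.const_mul m))
    (Filter.Eventually.of_forall fun a => (measurePreserving_add_right volume (m * a)).map_eq)

lemma trans_mean_cubic {σ : ℝ} (hσ : 0 < σ) :
    (∫ x : ℝ, (x ^ 3 + x ^ 2 + x) * gaussPDF1 σ x) = σ := by
  have hs := sqrt_two_pi_pos hσ
  have hrep : (fun x : ℝ => (x ^ 3 + x ^ 2 + x) * gaussPDF1 σ x) =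
      fun x : ℝ => (1 / Real.sqrt (2 * π * σ)) *
        ((0 + 1 * x + 1 * x ^ 2 + 1 * x ^ 3 + 0 * x ^ 4 + 0 * x ^ 5 + 0 * x ^ 6) *
          exp (-x ^ 2 / (2 * σ))) := by
    funext x
    unfold gaussPDF1
    ring
  rw [hrep, integral_const_mul, master hσ]
  field_simp
  ring

lemma inner_cubic {c : ℝ} (hc : 0 < c) (a : ℝ) :
    (∫ u : ℝ, ((u + a) ^ 3 + (u + a) ^ 2 + (u + a)) * gaussPDF1 c u) =
      a ^ 3 + a ^ 2 + a + 3 * a * c + c := by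
  have hs := sqrt_two_pi_pos hc
  have hrep : (fun u : ℝ => ((u + a) ^ 3 + (u + a) ^ 2 + (u + a)) * gaussPDF1 c u) =
      fun u : ℝ => (1 / Real.sqrt (2 * π * c)) *
        (((a ^ 3 + a ^ 2 + a) + (3 * a ^ 2 + 2 * a + 1) * u + (3 * a + 1) * u ^ 2 + 1 * u ^ 3 +
          0 * u ^ 4 + 0 * u ^ 5 + 0 * u ^ 6) * exp (-u ^ 2 / (2 * c))) := by
    funext u
    unfold gaussPDF1
    ring
  rw [hrep, integral_const_mul, master hc]
  field_simp
  ring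

lemma shearEquiv_apply (m : ℝ) (p : ℝ × ℝ) : shearEquiv m p = (p.1, p.2 + m * p.1) := rfl

lemma int_poly6_pdf {σ : ℝ} (hσ : 0 < σ) (c0 c1 c2 c3 c4 c5 c6 : ℝ) :
    Integrable fun x : ℝ =>
      (c0 + c1 * x + c2 * x ^ 2 + c3 * x ^ 3 + c4 * x ^ 4 + c5 * x ^ 5 + c6 * x ^ 6) *
        gaussPDF1 σ x := by
  have : (fun x : ℝ =>
      (c0 + c1 * x + c2 * x ^ 2 + c3 * x ^ 3 + c4 * x ^ 4 + c5 * x ^ 5 + c6 * x ^ 6) *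
        gaussPDF1 σ x) = fun x : ℝ => (1 / Real.sqrt (2 * π * σ)) *
      ((c0 + c1 * x + c2 * x ^ 2 + c3 * x ^ 3 + c4 * x ^ 4 + c5 * x ^ 5 + c6 * x ^ 6) *
        exp (-x ^ 2 / (2 * σ))) := by
    funext x
    unfold gaussPDF1
    ring
  rw [this]
  exact (int_poly6 hσ c0 c1 c2 c3 c4 c5 c6).const_mul _

lemma biv_int {σ c : ℝ} (m : ℝ) (hσ : 0 < σ) (hc : 0 < c) :
    (∫ q : ℝ × ℝ, (q.1 ^ 3 + q.1 ^ 2 + q.1) * (q.2 ^ 3 + q.2 ^ 2 + q.2) *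
        (gaussPDF1 σ q.1 * gaussPDF1 c (q.2 - m * q.1)))
    = (c + m + 3 * m * c) * σ + 3 * (m + 3 * m * c + m ^ 2 + m ^ 3) * σ ^ 2 +
        15 * m ^ 3 * σ ^ 3 := by
  rw [← (shear_measurePreserving m).integral_comp (shearEquiv m).measurableEmbedding]
  simp only [shearEquiv_apply, add_sub_cancel_right]
  rw [Measure.volume_eq_prod]
  -- integrability of the sheared integrand
  have hG : Integrable (fun z : ℝ × ℝ => (z.1 ^ 3 + z.1 ^ 2 + z.1) *
      ((z.2 + m * z.1) ^ 3 + (z.2 + m * z.1) ^ 2 + (z.2 + m * z.1)) *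
      (gaussPDF1 σ z.1 * gaussPDF1 c z.2)) ((volume : Measure ℝ).prod volume) := by
    have hA0 : Integrable fun x : ℝ =>
        (0 + 0 * x + m * x ^ 2 + (m + m ^ 2) * x ^ 3 + (m + m ^ 2 + m ^ 3) * x ^ 4 +
          (m ^ 2 + m ^ 3) * x ^ 5 + m ^ 3 * x ^ 6) * gaussPDF1 σ x :=
      int_poly6_pdf hσ _ _ _ _ _ _ _
    have hA1 : Integrable fun x : ℝ =>
        (0 + 1 * x + (1 + 2 * m) * x ^ 2 + (1 + 2 * m + 3 * m ^ 2) * x ^ 3 +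
          (2 * m + 3 * m ^ 2) * x ^ 4 + 3 * m ^ 2 * x ^ 5 + 0 * x ^ 6) * gaussPDF1 σ x :=
      int_poly6_pdf hσ _ _ _ _ _ _ _
    have hA2 : Integrable fun x : ℝ =>
        (0 + 1 * x + (1 + 3 * m) * x ^ 2 + (1 + 3 * m) * x ^ 3 + 3 * m * x ^ 4 +
          0 * x ^ 5 + 0 * x ^ 6) * gaussPDF1 σ x :=
      int_poly6_pdf hσ _ _ _ _ _ _ _
    have hA3 : Integrable fun x : ℝ =>
        (0 + 1 * x + 1 * x ^ 2 + 1 * x ^ 3 + 0 * x ^ 4 + 0 * x ^ 5 + 0 * x ^ 6) *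
          gaussPDF1 σ x :=
      int_poly6_pdf hσ _ _ _ _ _ _ _
    have hB : ∀ k : ℕ, Integrable fun u : ℝ => u ^ k * gaussPDF1 c u := by
      intro k
      have hb : 0 < 1 / (2 * c) := by positivity
      have : (fun u : ℝ => u ^ k * gaussPDF1 c u) = fun u : ℝ =>
          (1 / Real.sqrt (2 * π * c)) * (u ^ k * exp (-(1 / (2 * c)) * u ^ 2)) := by
        funext u
        unfold gaussPDF1
        rw [exp_form]
        ring
      rw [this]
      exact (int_pow_gauss hb k).const_mul _
    have hrep : (fun z : ℝ × ℝ => (z.1 ^ 3 + z.1 ^ 2 + z.1) *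
        ((z.2 + m * z.1) ^ 3 + (z.2 + m * z.1) ^ 2 + (z.2 + m * z.1)) *
        (gaussPDF1 σ z.1 * gaussPDF1 c z.2)) = fun z : ℝ × ℝ =>
        ((0 + 0 * z.1 + m * z.1 ^ 2 + (m + m ^ 2) * z.1 ^ 3 + (m + m ^ 2 + m ^ 3) * z.1 ^ 4 +
            (m ^ 2 + m ^ 3) * z.1 ^ 5 + m ^ 3 * z.1 ^ 6) * gaussPDF1 σ z.1) *
          (z.2 ^ 0 * gaussPDF1 c z.2) +
        ((0 + 1 * z.1 + (1 + 2 * m) * z.1 ^ 2 + (1 + 2 * m + 3 * m ^ 2) * z.1 ^ 3 +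
            (2 * m + 3 * m ^ 2) * z.1 ^ 4 + 3 * m ^ 2 * z.1 ^ 5 + 0 * z.1 ^ 6) *
            gaussPDF1 σ z.1) * (z.2 ^ 1 * gaussPDF1 c z.2) +
        ((0 + 1 * z.1 + (1 + 3 * m) * z.1 ^ 2 + (1 + 3 * m) * z.1 ^ 3 + 3 * m * z.1 ^ 4 +
            0 * z.1 ^ 5 + 0 * z.1 ^ 6) * gaussPDF1 σ z.1) * (z.2 ^ 2 * gaussPDF1 c z.2) +
        ((0 + 1 * z.1 + 1 * z.1 ^ 2 + 1 * z.1 ^ 3 + 0 * z.1 ^ 4 + 0 * z.1 ^ 5 + 0 * z.1 ^ 6) *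
            gaussPDF1 σ z.1) * (z.2 ^ 3 * gaussPDF1 c z.2) := by
      funext z
      ring
    rw [hrep]
    exact (((hA0.mul_prod (hB 0)).add (hA1.mul_prod (hB 1))).add
      (hA2.mul_prod (hB 2))).add (hA3.mul_prod (hB 3))
  rw [integral_prod _ hG]
  have hinner : ∀ x : ℝ, (∫ u : ℝ, (x ^ 3 + x ^ 2 + x) *
      ((u + m * x) ^ 3 + (u + m * x) ^ 2 + (u + m * x)) * (gaussPDF1 σ x * gaussPDF1 c u)) =
      ((x ^ 3 + x ^ 2 + x) * gaussPDF1 σ x) *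
        ((m * x) ^ 3 + (m * x) ^ 2 + m * x + 3 * (m * x) * c + c) := by
    intro x
    rw [show (fun u : ℝ => (x ^ 3 + x ^ 2 + x) *
        ((u + m * x) ^ 3 + (u + m * x) ^ 2 + (u + m * x)) * (gaussPDF1 σ x * gaussPDF1 c u)) =
        fun u : ℝ => ((x ^ 3 + x ^ 2 + x) * gaussPDF1 σ x) *
          (((u + m * x) ^ 3 + (u + m * x) ^ 2 + (u + m * x)) * gaussPDF1 c u) from
      funext fun u => by ring]
    rw [integral_const_mul, inner_cubic hc (m * x)]
  simp only [hinner]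
  have hrep2 : (fun x : ℝ => ((x ^ 3 + x ^ 2 + x) * gaussPDF1 σ x) *
      ((m * x) ^ 3 + (m * x) ^ 2 + m * x + 3 * (m * x) * c + c)) = fun x : ℝ =>
      (1 / Real.sqrt (2 * π * σ)) *
        ((0 + c * x + (c + (m + 3 * m * c)) * x ^ 2 + (c + (m + 3 * m * c) + m ^ 2) * x ^ 3 +
          ((m + 3 * m * c) + m ^ 2 + m ^ 3) * x ^ 4 + (m ^ 2 + m ^ 3) * x ^ 5 + m ^ 3 * x ^ 6) *
          exp (-x ^ 2 / (2 * σ))) := by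
    funext x
    unfold gaussPDF1
    ring
  rw [hrep2, integral_const_mul, master hσ]
  have hs := sqrt_two_pi_pos hσ
  field_simp
  ring

/-- Transformed mean `ν(f)`. -/
noncomputable def transMean (σ : ℝ) (f : ℝ → ℝ) : ℝ := ∫ x : ℝ, f x * gaussPDF1 σ x

/-- Transformed covariance `τ(f, g)`. -/
noncomputable def transCov (σii σjj σij : ℝ) (f g : ℝ → ℝ) : ℝ :=
  (∫ q : ℝ × ℝ, f q.1 * g q.2 * gaussPDF2 σii σjj σij q.1 q.2) -
    transMean σii f * transMean σjj g

theorem transformed_moments_cubic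
    (σii σjj σij : ℝ) (hii : 0 < σii) (hjj : 0 < σjj)
    (hd : 0 < σii * σjj - σij ^ 2) :
    transMean σii (fun x => x ^ 3 + x ^ 2 + x) = σii ∧
    transCov σii σjj σij (fun x => x ^ 3 + x ^ 2 + x) (fun x => x ^ 3 + x ^ 2 + x) =
      σij + 3 * σii * σij + 3 * σjj * σij + 2 * σij ^ 2 + 9 * σii * σjj * σij + 6 * σij ^ 3 := by
  have hmean : ∀ σ : ℝ, 0 < σ → transMean σ (fun x => x ^ 3 + x ^ 2 + x) = σ := by
    intro σ hσ
    unfold transMean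
    exact trans_mean_cubic hσ
  refine ⟨hmean σii hii, ?_⟩
  have hc : 0 < (σii * σjj - σij ^ 2) / σii := by positivity
  unfold transCov
  rw [hmean σii hii, hmean σjj hjj]
  have hfac : (∫ q : ℝ × ℝ, (fun x => x ^ 3 + x ^ 2 + x) q.1 * (fun x => x ^ 3 + x ^ 2 + x) q.2 *
      gaussPDF2 σii σjj σij q.1 q.2) =
      ∫ q : ℝ × ℝ, (q.1 ^ 3 + q.1 ^ 2 + q.1) * (q.2 ^ 3 + q.2 ^ 2 + q.2) *
        (gaussPDF1 σii q.1 * gaussPDF1 ((σii * σjj - σij ^ 2) / σii) (q.2 - σij / σii * q.1)) := by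
    congr 1
    funext q
    rw [gaussPDF2_factor σii σjj σij hii hd]
  rw [hfac, biv_int (σij / σii) hii hc]
  have hii' : σii ≠ 0 := ne_of_gt hii
  field_simp
  ring
end

section
/- Let a, b > 0 and define f₁(x) := (1/√(2π·a))·e^{−x²/(2a)} and f₂(x) := (1/√(2π·b))·e^{−x²/(2b)}. Then the transformed covariance satisfies τ(f₁,f₂) = (1/(2π))·( ((a+σii)·(b+σjj) − σij²)^{−1/2} − ((a+σii)·(b+σjj))^{−1/2} ). -/
open MeasureTheory Real

lemma pos_eq_of_sq {x y : ℝ} (hx : 0 ≤ x) (hy : 0 ≤ y) (h : x ^ 2 = y ^ 2) : x = y := by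
  rw [← Real.sqrt_sq hx, ← Real.sqrt_sq hy, h]

lemma int_lin (A c : ℝ) (hA : 0 < A) :
    ∫ x : ℝ, Real.exp (-(A * x ^ 2) + c * x) = Real.sqrt (π / A) * Real.exp (c ^ 2 / (4 * A)) := by
  have h : ∀ x : ℝ, -(A * x ^ 2) + c * x = -A * (x - c / (2 * A)) ^ 2 + c ^ 2 / (4 * A) := by
    intro x; field_simp; ring
  simp_rw [h, Real.exp_add, integral_mul_const]
  rw [integral_sub_right_eq_self (fun x => Real.exp (-A * x ^ 2)) (c / (2 * A)),
    integral_gaussian]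

lemma integrable2 (A B C : ℝ) (hA : 0 < A) (hC : 0 < C) (h : B ^ 2 < 4 * A * C) :
    Integrable (fun q : ℝ × ℝ => Real.exp (-(A * q.1 ^ 2 + B * q.1 * q.2 + C * q.2 ^ 2))) := by
  set ε := (4 * A * C - B ^ 2) / (4 * (A + C)) with hεdef
  have hAC : 0 < A + C := by linarith
  have hε : 0 < ε := by apply div_pos <;> nlinarith
  have hεA : ε < A := by
    rw [hεdef, div_lt_iff₀ (by linarith)]; nlinarith
  have hkey : 4 * (A - ε) * (C - ε) - B ^ 2 = 4 * ε ^ 2 := by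
    rw [hεdef]; field_simp [hAC.ne']; ring
  refine (((integrable_exp_neg_mul_sq hε).mul_prod (integrable_exp_neg_mul_sq hε)).mono
    ?_ ?_)
  · exact (Continuous.rexp (by continuity)).aestronglyMeasurable
  · filter_upwards with q
    rw [Real.norm_eq_abs, Real.norm_eq_abs, abs_of_nonneg (Real.exp_nonneg _),
      abs_of_nonneg (by positivity : (0:ℝ) ≤ rexp (-ε * q.1 ^ 2) * rexp (-ε * q.2 ^ 2)),
      ← Real.exp_add]
    apply Real.exp_le_exp.2
    nlinarith [sq_nonneg (2 * (A - ε) * q.1 + B * q.2), sq_nonneg q.2, sq_nonneg q.1]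

lemma double_gauss (A B C : ℝ) (hA : 0 < A) (hC : 0 < C) (h : B ^ 2 < 4 * A * C) :
    ∫ q : ℝ × ℝ, Real.exp (-(A * q.1 ^ 2 + B * q.1 * q.2 + C * q.2 ^ 2)) =
      π / Real.sqrt (A * C - B ^ 2 / 4) := by
  have hE : 0 < A - B ^ 2 / (4 * C) := by
    rw [sub_pos, div_lt_iff₀ (by linarith)]; nlinarith
  rw [MeasureTheory.Measure.volume_eq_prod ℝ ℝ, integral_prod _ (integrable2 A B C hA hC h)]
  have h1 : ∀ x y : ℝ, Real.exp (-(A * x ^ 2 + B * x * y + C * y ^ 2)) =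
      Real.exp (-(C * y ^ 2) + (-(B * x)) * y) * Real.exp (-(A * x ^ 2)) := by
    intros x y; rw [← Real.exp_add]; congr 1; ring
  simp_rw [h1, integral_mul_const, int_lin C _ hC]
  have h2 : ∀ x : ℝ, Real.sqrt (π / C) * Real.exp ((-(B * x)) ^ 2 / (4 * C)) *
      Real.exp (-(A * x ^ 2)) =
      Real.sqrt (π / C) * Real.exp (-(A - B ^ 2 / (4 * C)) * x ^ 2) := by
    intro x
    rw [mul_assoc, ← Real.exp_add]
    congr 1
    field_simp
    ring
  simp_rw [h2, integral_const_mul, integral_gaussian]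
  rw [← Real.sqrt_mul (by positivity)]
  rw [show π / C * (π / (A - B ^ 2 / (4 * C))) = π ^ 2 / (C * (A - B ^ 2 / (4 * C))) by
    field_simp]
  rw [show C * (A - B ^ 2 / (4 * C)) = A * C - B ^ 2 / 4 by field_simp]
  rw [Real.sqrt_div (by positivity), Real.sqrt_sq pi_pos.le]

lemma mean_gauss (a σ : ℝ) (ha : 0 < a) (hσ : 0 < σ) :
    transMean σ (fun x => (1 / Real.sqrt (2 * π * a)) * Real.exp (-x ^ 2 / (2 * a))) =
      1 / Real.sqrt (2 * π * (a + σ)) := by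
  unfold transMean gaussPDF1
  have h : ∀ x : ℝ,
      (1 / Real.sqrt (2 * π * a) * Real.exp (-x ^ 2 / (2 * a))) *
        (1 / Real.sqrt (2 * π * σ) * Real.exp (-x ^ 2 / (2 * σ))) =
      (1 / Real.sqrt (2 * π * a) * (1 / Real.sqrt (2 * π * σ))) *
        Real.exp (-((a + σ) / (2 * a * σ)) * x ^ 2) := by
    intro x
    rw [mul_mul_mul_comm, ← Real.exp_add]
    congr 1
    field_simp
    ring
  simp_rw [h, integral_const_mul, integral_gaussian]
  rw [one_div, one_div, one_div, ← Real.sqrt_inv, ← Real.sqrt_inv, ← Real.sqrt_inv,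
    ← Real.sqrt_mul (by positivity), ← Real.sqrt_mul (by positivity)]
  congr 1
  have hπ : π ≠ 0 := pi_ne_zero
  field_simp


lemma hB_aux {A B C t : ℝ} (h : A * C - B ^ 2 / 4 = t) (ht : 0 < t) :
    B ^ 2 < 4 * A * C := by nlinarith

lemma aux_E1 (σii σjj σij a b d : ℝ) (ha : 0 < a) (hb : 0 < b)
    (hd : 0 < d) (hD : 0 < (a + σii) * (b + σjj) - σij ^ 2) :
    1 / Real.sqrt (2 * π * a) * (1 / Real.sqrt (2 * π * b)) * (1 / (2 * π * Real.sqrt d)) *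
      (π / Real.sqrt (((a + σii) * (b + σjj) - σij ^ 2) / (4 * a * b * d))) =
      1 / (2 * π) * (Real.sqrt ((a + σii) * (b + σjj) - σij ^ 2))⁻¹ := by
  apply pos_eq_of_sq (by positivity) (by positivity)
  have e1 : Real.sqrt (2 * π * a) ^ 2 = 2 * π * a := Real.sq_sqrt (by positivity)
  have e2 : Real.sqrt (2 * π * b) ^ 2 = 2 * π * b := Real.sq_sqrt (by positivity)
  have e3 : Real.sqrt d ^ 2 = d := Real.sq_sqrt hd.le
  have e4 : Real.sqrt (((a + σii) * (b + σjj) - σij ^ 2) / (4 * a * b * d)) ^ 2 =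
      ((a + σii) * (b + σjj) - σij ^ 2) / (4 * a * b * d) := Real.sq_sqrt (by positivity)
  have e5 : Real.sqrt ((a + σii) * (b + σjj) - σij ^ 2) ^ 2 =
      (a + σii) * (b + σjj) - σij ^ 2 := Real.sq_sqrt hD.le
  rw [mul_pow, mul_pow, mul_pow, div_pow, div_pow, div_pow, div_pow, mul_pow, mul_pow,
    one_pow, e1, e2, e3, e4]
  have n5 : (a + σii) * (b + σjj) - σij ^ 2 ≠ 0 := ne_of_gt hD
  rw [mul_pow, inv_pow, e5]
  field_simp
  ring

lemma aux_E2 (x y : ℝ) (hx : 0 < x) (hy : 0 < y) :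
    1 / Real.sqrt (2 * π * x) * (1 / Real.sqrt (2 * π * y)) =
      1 / (2 * π) * (Real.sqrt (x * y))⁻¹ := by
  apply pos_eq_of_sq (by positivity) (by positivity)
  have e1 : Real.sqrt (2 * π * x) ^ 2 = 2 * π * x := Real.sq_sqrt (by positivity)
  have e2 : Real.sqrt (2 * π * y) ^ 2 = 2 * π * y := Real.sq_sqrt (by positivity)
  have e5 : Real.sqrt (x * y) ^ 2 = x * y := Real.sq_sqrt (by positivity)
  rw [mul_pow, div_pow, div_pow, one_pow, e1, e2, mul_pow, inv_pow, e5, div_pow, one_pow,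
    mul_pow]
  field_simp

theorem transformed_covariance_gaussian
    (σii σjj σij : ℝ) (hii : 0 < σii) (hjj : 0 < σjj)
    (hd : 0 < σii * σjj - σij ^ 2) (a b : ℝ) (ha : 0 < a) (hb : 0 < b) :
    transCov σii σjj σij
        (fun x => (1 / Real.sqrt (2 * π * a)) * Real.exp (-x ^ 2 / (2 * a)))
        (fun x => (1 / Real.sqrt (2 * π * b)) * Real.exp (-x ^ 2 / (2 * b))) =
      (1 / (2 * π)) * (((a + σii) * (b + σjj) - σij ^ 2) ^ (-(1 / 2) : ℝ) -
        ((a + σii) * (b + σjj)) ^ (-(1 / 2) : ℝ)) := by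
  have hπ : (0:ℝ) < π := pi_pos
  set d : ℝ := σii * σjj - σij ^ 2 with hddef
  have hdne : d ≠ 0 := ne_of_gt hd
  have hD : 0 < (a + σii) * (b + σjj) - σij ^ 2 := by nlinarith
  have hP : 0 < (a + σii) * (b + σjj) := by positivity
  set A : ℝ := 1 / (2 * a) + σjj / (2 * d) with hAdef
  set B : ℝ := -σij / d with hBdef
  set C : ℝ := 1 / (2 * b) + σii / (2 * d) with hCdef
  have hA : 0 < A := by apply add_pos <;> positivity
  have hC : 0 < C := by apply add_pos <;> positivity
  have key : A * C - B ^ 2 / 4 =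
      ((a + σii) * (b + σjj) - σij ^ 2) / (4 * a * b * d) := by
    rw [hAdef, hBdef, hCdef]
    field_simp
    ring
  have hB : B ^ 2 < 4 * A * C :=
    hB_aux key (by positivity)
  have hK : (1 / (2 * π)) * (((a + σii) * (b + σjj) - σij ^ 2) ^ (-(1 / 2) : ℝ)) =
      (1 / (2 * π)) * (Real.sqrt ((a + σii) * (b + σjj) - σij ^ 2))⁻¹ := by
    rw [Real.rpow_neg hD.le, Real.sqrt_eq_rpow]
  unfold transCov gaussPDF2
  rw [mean_gauss a σii ha hii, mean_gauss b σjj hb hjj]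
  have hint : ∀ q : ℝ × ℝ,
      ((fun x => (1 / Real.sqrt (2 * π * a)) * Real.exp (-x ^ 2 / (2 * a))) q.1) *
        ((fun x => (1 / Real.sqrt (2 * π * b)) * Real.exp (-x ^ 2 / (2 * b))) q.2) *
        ((1 / (2 * π * Real.sqrt d)) *
          Real.exp (-(σjj * q.1 ^ 2 - 2 * σij * q.1 * q.2 + σii * q.2 ^ 2) / (2 * d))) =
      (1 / Real.sqrt (2 * π * a) * (1 / Real.sqrt (2 * π * b)) * (1 / (2 * π * Real.sqrt d))) *
        Real.exp (-(A * q.1 ^ 2 + B * q.1 * q.2 + C * q.2 ^ 2)) := by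
    intro q
    simp only
    calc (1 / Real.sqrt (2 * π * a) * Real.exp (-q.1 ^ 2 / (2 * a))) *
          (1 / Real.sqrt (2 * π * b) * Real.exp (-q.2 ^ 2 / (2 * b))) *
          ((1 / (2 * π * Real.sqrt d)) *
            Real.exp (-(σjj * q.1 ^ 2 - 2 * σij * q.1 * q.2 + σii * q.2 ^ 2) / (2 * d)))
        = (1 / Real.sqrt (2 * π * a) * (1 / Real.sqrt (2 * π * b)) *
            (1 / (2 * π * Real.sqrt d))) *
          (Real.exp (-q.1 ^ 2 / (2 * a)) * Real.exp (-q.2 ^ 2 / (2 * b)) *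
            Real.exp (-(σjj * q.1 ^ 2 - 2 * σij * q.1 * q.2 + σii * q.2 ^ 2) / (2 * d))) := by
          ring
      _ = (1 / Real.sqrt (2 * π * a) * (1 / Real.sqrt (2 * π * b)) *
            (1 / (2 * π * Real.sqrt d))) *
          Real.exp (-(A * q.1 ^ 2 + B * q.1 * q.2 + C * q.2 ^ 2)) := by
          rw [← Real.exp_add, ← Real.exp_add]
          congr 1
          rw [hAdef, hBdef, hCdef]
          field_simp
          ring
  simp_rw [← hddef, hint]
  rw [integral_const_mul, double_gauss A B C hA hC hB, key,
    Real.rpow_neg hD.le, Real.rpow_neg hP.le, ← Real.sqrt_eq_rpow, ← Real.sqrt_eq_rpow]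
  rw [aux_E1 σii σjj σij a b d ha hb hd hD, aux_E2 (a + σii) (b + σjj) (by positivity) (by positivity)]
  ring
end

section
/- Suppose σii = σjj = 1 and |σij| < 1, and let Φ(x) := (1/√(2π))·∫_{−∞}^x e^{−t²/2} dt be the standard normal cumulative distribution function. Then the transformed covariance satisfies τ(Φ,Φ) = (1/(2π))·arcsin(σij/2); equivalently, ∫_{ℝ²} Φ(x)·Φ(w)·p(x,w) dx dw − 1/4 = (1/(2π))·arcsin(σij/2). (This yields Kruskal's result: after transforming both marginals to be uniform, the new correlation is (6/π)·arcsin(σij/2).) -/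
open MeasureTheory Real

/-- The standard normal cumulative distribution function. -/
noncomputable def stdNormalCDF (x : ℝ) : ℝ :=
  (1 / Real.sqrt (2 * π)) * ∫ t in Set.Iic x, Real.exp (-t ^ 2 / 2)

namespace Krusk

lemma sq2pi_pos : 0 < Real.sqrt (2 * π) := Real.sqrt_pos.2 (by positivity)

/-- integrability of centered gaussian density kernels -/
lemma integrable_gauss {b : ℝ} (hb : 0 < b) :
    Integrable (fun x : ℝ => Real.exp (-x ^ 2 / (2 * b))) := by
  have h := integrable_exp_neg_mul_sq (show (0:ℝ) < 1 / (2 * b) by positivity)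
  refine h.congr (Filter.Eventually.of_forall fun x => ?_)
  ring_nf

lemma integral_gauss {b : ℝ} (hb : 0 < b) :
    (∫ x : ℝ, Real.exp (-x ^ 2 / (2 * b))) = Real.sqrt (2 * π * b) := by
  have h := integral_gaussian (1 / (2 * b))
  rw [show π / (1 / (2 * b)) = 2 * π * b by field_simp] at h
  rw [← h]
  congr 1 with x
  ring_nf

lemma integrable_mul_gauss {b : ℝ} (hb : 0 < b) :
    Integrable (fun x : ℝ => x * Real.exp (-(b * x ^ 2) / 2)) := by
  have h := integrable_rpow_mul_exp_neg_mul_sq (show (0:ℝ) < b / 2 by positivity)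
    (show (-1 : ℝ) < 1 by norm_num)
  refine h.congr (Filter.Eventually.of_forall fun x => ?_)
  simp only [Real.rpow_one]
  ring_nf

lemma hasDerivAt_cdf (x : ℝ) :
    HasDerivAt stdNormalCDF ((1 / Real.sqrt (2 * π)) * Real.exp (-x ^ 2 / 2)) x := by
  have hint : Integrable (fun t : ℝ => Real.exp (-t ^ 2 / 2)) := by
    simpa using integrable_gauss one_pos
  have key : ∀ y : ℝ, (∫ t in Set.Iic y, Real.exp (-t ^ 2 / 2)) =
      (∫ t in Set.Iic 0, Real.exp (-t ^ 2 / 2)) + ∫ t in (0:ℝ)..y, Real.exp (-t ^ 2 / 2) := by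
    intro y
    rw [← intervalIntegral.integral_Iic_sub_Iic hint.integrableOn hint.integrableOn]
    ring
  have hd : HasDerivAt (fun y => ∫ t in (0:ℝ)..y, Real.exp (-t ^ 2 / 2))
      (Real.exp (-x ^ 2 / 2)) x := by
    refine intervalIntegral.integral_hasDerivAt_right hint.intervalIntegrable
      hint.aestronglyMeasurable.stronglyMeasurableAtFilter ?_
    exact (Real.continuous_exp.comp (by continuity)).continuousAt
  have : HasDerivAt (fun y => (1 / Real.sqrt (2 * π)) *
      ((∫ t in Set.Iic 0, Real.exp (-t ^ 2 / 2)) + ∫ t in (0:ℝ)..y, Real.exp (-t ^ 2 / 2)))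
      ((1 / Real.sqrt (2 * π)) * Real.exp (-x ^ 2 / 2)) x :=
    ((hd.const_add _).const_mul _)
  refine this.congr_of_eventuallyEq (Filter.Eventually.of_forall fun y => ?_)
  rw [stdNormalCDF, key y]

lemma cdf_continuous : Continuous stdNormalCDF :=
  continuous_iff_continuousAt.2 fun x => (hasDerivAt_cdf x).continuousAt

lemma cdf_nonneg (x : ℝ) : 0 ≤ stdNormalCDF x := by
  refine mul_nonneg (by positivity) (integral_nonneg fun t => (Real.exp_pos _).le)

lemma cdf_le_one (x : ℝ) : stdNormalCDF x ≤ 1 := by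
  have hint : Integrable (fun t : ℝ => Real.exp (-t ^ 2 / 2)) := by
    simpa using integrable_gauss one_pos
  have h1 : (∫ t in Set.Iic x, Real.exp (-t ^ 2 / 2)) ≤ ∫ t : ℝ, Real.exp (-t ^ 2 / 2) :=
    setIntegral_le_integral hint (Filter.Eventually.of_forall fun t => (Real.exp_pos _).le)
  have h2 : (∫ t : ℝ, Real.exp (-t ^ 2 / 2)) = Real.sqrt (2 * π) := by
    simpa using integral_gauss one_pos
  rw [stdNormalCDF]
  rw [h2] at h1
  calc (1 / Real.sqrt (2 * π)) * ∫ t in Set.Iic x, Real.exp (-t ^ 2 / 2)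
      ≤ (1 / Real.sqrt (2 * π)) * Real.sqrt (2 * π) := by
        exact mul_le_mul_of_nonneg_left h1 (by positivity)
    _ = 1 := by field_simp

lemma cdf_abs_le_one (x : ℝ) : |stdNormalCDF x| ≤ 1 := by
  rw [abs_of_nonneg (cdf_nonneg x)]; exact cdf_le_one x

lemma cdf_add_cdf_neg (x : ℝ) : stdNormalCDF x + stdNormalCDF (-x) = 1 := by
  have hint : Integrable (fun t : ℝ => Real.exp (-t ^ 2 / 2)) := by
    simpa using integrable_gauss one_pos
  have h2 : (∫ t : ℝ, Real.exp (-t ^ 2 / 2)) = Real.sqrt (2 * π) := by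
    simpa using integral_gauss one_pos
  have hneg : (∫ t in Set.Iic (-x), Real.exp (-t ^ 2 / 2)) =
      ∫ t in Set.Ioi x, Real.exp (-t ^ 2 / 2) := by
    have h := integral_comp_neg_Iic (-x) fun t => Real.exp (-t ^ 2 / 2)
    simp only [neg_sq, neg_neg] at h
    exact h
  have hadd : (∫ t in Set.Iic x, Real.exp (-t ^ 2 / 2)) +
      (∫ t in Set.Ioi x, Real.exp (-t ^ 2 / 2)) = Real.sqrt (2 * π) := by
    rw [intervalIntegral.integral_Iic_add_Ioi hint.integrableOn hint.integrableOn, h2]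
  rw [stdNormalCDF, stdNormalCDF, hneg, ← mul_add, hadd]
  field_simp

lemma cdf_zero : stdNormalCDF 0 = 1 / 2 := by
  have := cdf_add_cdf_neg 0
  rw [neg_zero] at this
  linarith

end Krusk

namespace Krusk

lemma integrable_quad {b : ℝ} (hb : 0 < b) :
    Integrable (fun x : ℝ => Real.exp (-(b * x ^ 2) / 2)) := by
  have h := integrable_exp_neg_mul_sq (show (0:ℝ) < b / 2 by positivity)
  refine h.congr (Filter.Eventually.of_forall fun x => ?_)
  ring_nf

lemma integral_quad {b : ℝ} (hb : 0 < b) :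
    (∫ x : ℝ, Real.exp (-(b * x ^ 2) / 2)) = Real.sqrt (2 * π / b) := by
  have h := integral_gaussian (b / 2)
  rw [show π / (b / 2) = 2 * π / b by field_simp] at h
  rw [← h]
  congr 1 with x
  ring_nf

/-- the integral of the CDF against a centered gaussian kernel -/
lemma integral_cdf_gauss {s : ℝ} (hs : 0 < s) :
    (∫ x : ℝ, stdNormalCDF x * Real.exp (-x ^ 2 / (2 * s))) = Real.sqrt (2 * π * s) / 2 := by
  have hint : Integrable (fun x : ℝ => stdNormalCDF x * Real.exp (-x ^ 2 / (2 * s))) :=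
    (integrable_gauss hs).bdd_mul cdf_continuous.aestronglyMeasurable
      (c := 1) (Filter.Eventually.of_forall fun x => by simpa using cdf_abs_le_one x)
  have hint' : Integrable (fun x : ℝ => stdNormalCDF (-x) * Real.exp (-x ^ 2 / (2 * s))) :=
    (integrable_gauss hs).bdd_mul
      (cdf_continuous.comp continuous_neg).aestronglyMeasurable
      (c := 1) (Filter.Eventually.of_forall fun x => by simpa using cdf_abs_le_one (-x))
  have hflip : (∫ x : ℝ, stdNormalCDF (-x) * Real.exp (-x ^ 2 / (2 * s)))
      = ∫ x : ℝ, stdNormalCDF x * Real.exp (-x ^ 2 / (2 * s)) := by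
    have := integral_neg_eq_self
      (fun x : ℝ => stdNormalCDF (-x) * Real.exp (-x ^ 2 / (2 * s))) volume
    simpa [neg_sq] using this.symm
  have hsum : (∫ x : ℝ, stdNormalCDF x * Real.exp (-x ^ 2 / (2 * s)))
      + (∫ x : ℝ, stdNormalCDF (-x) * Real.exp (-x ^ 2 / (2 * s)))
      = Real.sqrt (2 * π * s) := by
    rw [← integral_add hint hint']
    rw [show (fun x : ℝ => stdNormalCDF x * Real.exp (-x ^ 2 / (2 * s))
        + stdNormalCDF (-x) * Real.exp (-x ^ 2 / (2 * s)))
        = fun x : ℝ => Real.exp (-x ^ 2 / (2 * s)) by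
      funext x
      rw [← add_mul, cdf_add_cdf_neg, one_mul]]
    exact integral_gauss hs
  rw [hflip] at hsum
  linarith

/-- Gaussian convolution integral -/
lemma gauss_conv {s : ℝ} (hs : 0 < s) (a : ℝ) :
    (∫ u : ℝ, Real.exp (-(a + u) ^ 2 / 2) * Real.exp (-u ^ 2 / (2 * s)))
      = Real.sqrt (2 * π * (s / (1 + s))) * Real.exp (-a ^ 2 / (2 * (1 + s))) := by
  have h1s : (0:ℝ) < 1 + s := by linarith
  have hb : 0 < s / (1 + s) := by positivity
  have key : ∀ u : ℝ, Real.exp (-(a + u) ^ 2 / 2) * Real.exp (-u ^ 2 / (2 * s))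
      = Real.exp (-(u + s * a / (1 + s)) ^ 2 / (2 * (s / (1 + s))))
        * Real.exp (-a ^ 2 / (2 * (1 + s))) := by
    intro u
    rw [← Real.exp_add, ← Real.exp_add]
    congr 1
    field_simp
    ring
  simp_rw [key]
  rw [MeasureTheory.integral_mul_const]
  rw [show (∫ u : ℝ, Real.exp (-(u + s * a / (1 + s)) ^ 2 / (2 * (s / (1 + s)))))
      = ∫ u : ℝ, Real.exp (-u ^ 2 / (2 * (s / (1 + s)))) from
    integral_add_right_eq_self (fun u => Real.exp (-u ^ 2 / (2 * (s / (1 + s))))) _]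
  rw [integral_gauss hb]

end Krusk

namespace Krusk

lemma cdf_conv {s : ℝ} (hs : 0 < s) (a : ℝ) :
    (∫ u : ℝ, stdNormalCDF (a + u) * Real.exp (-u ^ 2 / (2 * s)))
      = Real.sqrt (2 * π * s) * stdNormalCDF (a / Real.sqrt (1 + s)) := by
  have h1s : (0:ℝ) < 1 + s := by linarith
  set C : ℝ → ℝ := fun a => ∫ u : ℝ, stdNormalCDF (a + u) * Real.exp (-u ^ 2 / (2 * s)) with hC
  set D : ℝ → ℝ := fun a => Real.sqrt (2 * π * s) * stdNormalCDF (a / Real.sqrt (1 + s)) with hD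
  set E : ℝ → ℝ := fun a =>
    (1 / Real.sqrt (2 * π)) * (Real.sqrt (2 * π * (s / (1 + s)))
      * Real.exp (-a ^ 2 / (2 * (1 + s)))) with hE
  have hCd : ∀ a₀ : ℝ, HasDerivAt C (E a₀) a₀ := by
    intro a₀
    have main := hasDerivAt_integral_of_dominated_loc_of_deriv_le (μ := volume) (𝕜 := ℝ)
      (F := fun a u => stdNormalCDF (a + u) * Real.exp (-u ^ 2 / (2 * s)))
      (F' := fun a u => ((1 / Real.sqrt (2 * π)) * Real.exp (-(a + u) ^ 2 / 2))
        * Real.exp (-u ^ 2 / (2 * s)))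
      (x₀ := a₀) (bound := fun u => (1 / Real.sqrt (2 * π)) * Real.exp (-u ^ 2 / (2 * s)))
      (Metric.ball_mem_nhds _ one_pos)
      (Filter.Eventually.of_forall fun a =>
        ((cdf_continuous.comp (continuous_const.add continuous_id)).mul
          (by continuity)).aestronglyMeasurable)
      ((integrable_gauss hs).bdd_mul
        (cdf_continuous.comp (continuous_const.add continuous_id)).aestronglyMeasurable
        (c := 1) (Filter.Eventually.of_forall fun u => by simpa using cdf_abs_le_one (a₀ + u)))
      (((continuous_const.mul (by continuity)).mul (by continuity)).aestronglyMeasurable)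
      (Filter.Eventually.of_forall fun u => fun a _ha => ?_)
      ((integrable_gauss hs).const_mul _)
      (Filter.Eventually.of_forall fun u => fun a _ha => ?_)
    · have h2 := main.2
      rw [hE]
      have hfun : (fun u : ℝ => ((1 / Real.sqrt (2 * π)) * Real.exp (-(a₀ + u) ^ 2 / 2))
          * Real.exp (-u ^ 2 / (2 * s)))
          = fun u : ℝ => (1 / Real.sqrt (2 * π)) * (Real.exp (-(a₀ + u) ^ 2 / 2)
            * Real.exp (-u ^ 2 / (2 * s))) := by
        funext u; ring
      have hval : (∫ u : ℝ, ((1 / Real.sqrt (2 * π)) * Real.exp (-(a₀ + u) ^ 2 / 2))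
          * Real.exp (-u ^ 2 / (2 * s)))
          = (1 / Real.sqrt (2 * π)) * (Real.sqrt (2 * π * (s / (1 + s)))
            * Real.exp (-a₀ ^ 2 / (2 * (1 + s)))) := by
        rw [hfun, MeasureTheory.integral_const_mul, gauss_conv hs a₀]
      rwa [hval] at h2
    · -- bound
      have e1 : Real.exp (-(a + u) ^ 2 / 2) ≤ 1 :=
        Real.exp_le_one_iff.2 (by nlinarith [sq_nonneg (a + u)])
      have : ‖(1 / Real.sqrt (2 * π) * Real.exp (-(a + u) ^ 2 / 2))
          * Real.exp (-u ^ 2 / (2 * s))‖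
          = (1 / Real.sqrt (2 * π)) * Real.exp (-(a + u) ^ 2 / 2)
            * Real.exp (-u ^ 2 / (2 * s)) := by
        rw [Real.norm_eq_abs, abs_of_nonneg (by positivity)]
      rw [this]
      have h2π : (0:ℝ) ≤ 1 / Real.sqrt (2 * π) := by positivity
      nlinarith [Real.exp_pos (-u ^ 2 / (2 * s)), Real.exp_pos (-(a + u) ^ 2 / 2),
        mul_le_mul_of_nonneg_left e1 h2π,
        mul_le_mul_of_nonneg_right (mul_le_mul_of_nonneg_left e1 h2π)
          (Real.exp_pos (-u ^ 2 / (2 * s))).le]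
    · -- differentiability
      have h1 : HasDerivAt (fun a : ℝ => a + u) 1 a := (hasDerivAt_id a).add_const u
      have h2 : HasDerivAt (fun a : ℝ => stdNormalCDF (a + u))
          ((1 / Real.sqrt (2 * π)) * Real.exp (-(a + u) ^ 2 / 2)) a := by
        exact ((hasDerivAt_cdf (a + u)).comp a h1).congr_deriv (mul_one _)
      simpa using h2.mul_const (Real.exp (-u ^ 2 / (2 * s)))
  have hDd : ∀ a₀ : ℝ, HasDerivAt D (E a₀) a₀ := by
    intro a₀
    have h1 : HasDerivAt (fun a : ℝ => a / Real.sqrt (1 + s)) (1 / Real.sqrt (1 + s)) a₀ := by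
      simpa using (hasDerivAt_id a₀).div_const (Real.sqrt (1 + s))
    have h2 := ((hasDerivAt_cdf (a₀ / Real.sqrt (1 + s))).comp a₀ h1).const_mul
      (Real.sqrt (2 * π * s))
    have hsq : (a₀ / Real.sqrt (1 + s)) ^ 2 = a₀ ^ 2 / (1 + s) := by
      rw [div_pow, Real.sq_sqrt h1s.le]
    have hs1 : Real.sqrt (2 * π * (s / (1 + s))) = Real.sqrt (2 * π * s) / Real.sqrt (1 + s) := by
      rw [show 2 * π * (s / (1 + s)) = 2 * π * s / (1 + s) by ring,
        Real.sqrt_div (by positivity)]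
    have hval : Real.sqrt (2 * π * s) * ((1 / Real.sqrt (2 * π))
        * Real.exp (-(a₀ / Real.sqrt (1 + s)) ^ 2 / 2) * (1 / Real.sqrt (1 + s))) = E a₀ := by
      simp only [hE, hsq, hs1]
      have h1 : (1 + s) ≠ 0 := h1s.ne'
      have h2 : Real.sqrt (2 * π) ≠ 0 := sq2pi_pos.ne'
      have h3 : Real.sqrt (1 + s) ≠ 0 := (Real.sqrt_pos.2 h1s).ne'
      rw [show -(a₀ ^ 2 / (1 + s)) / 2 = -a₀ ^ 2 / (2 * (1 + s)) by field_simp]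
      ring
    exact hval ▸ h2
  have key : ∀ a₀ : ℝ, C a₀ - D a₀ = C 0 - D 0 := by
    intro a₀
    have hdiff : Differentiable ℝ (fun a => C a - D a) :=
      fun a => ((hCd a).sub (hDd a)).differentiableAt
    have hderiv : ∀ a : ℝ, deriv (fun a => C a - D a) a = 0 := by
      intro a
      rw [HasDerivAt.deriv (f := fun a => C a - D a) ((hCd a).sub (hDd a))]
      ring
    exact is_const_of_deriv_eq_zero hdiff hderiv a₀ 0
  have hC0 : C 0 = Real.sqrt (2 * π * s) / 2 := by
    rw [hC]
    simp only [zero_add]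
    exact integral_cdf_gauss hs
  have hD0 : D 0 = Real.sqrt (2 * π * s) / 2 := by
    rw [hD]
    simp only [zero_div, cdf_zero]
    ring
  have := key a
  rw [hC0, hD0] at this
  have : C a = D a := by linarith
  exact this

end Krusk

namespace Krusk

lemma parts {b : ℝ} (hb : 0 < b) :
    (∫ x : ℝ, stdNormalCDF x * (x * Real.exp (-(b * x ^ 2) / 2)))
      = 1 / (b * Real.sqrt (1 + b)) := by
  have h1b : (0:ℝ) < 1 + b := by linarith
  have hbne : b ≠ 0 := hb.ne'
  have h2πne : Real.sqrt (2 * π) ≠ 0 := sq2pi_pos.ne'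
  set u' : ℝ → ℝ := fun x => (1 / Real.sqrt (2 * π)) * Real.exp (-x ^ 2 / 2) with hu'
  set v : ℝ → ℝ := fun x => -(Real.exp (-(b * x ^ 2) / 2)) / b with hv'
  set v' : ℝ → ℝ := fun x => x * Real.exp (-(b * x ^ 2) / 2) with hv''
  have hu : ∀ x, HasDerivAt stdNormalCDF (u' x) x := hasDerivAt_cdf
  have hv : ∀ x, HasDerivAt v (v' x) x := by
    intro x
    have h0 : HasDerivAt (fun x : ℝ => x ^ 2) (2 * x) x := by
      simpa using hasDerivAt_pow 2 x
    have hq : HasDerivAt (fun x : ℝ => -(b * x ^ 2) / 2) (-(b * x)) x := by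
      have := ((h0.const_mul b).neg).div_const 2
      refine this.congr_deriv ?_
      ring
    have hexp := (Real.hasDerivAt_exp (-(b * x ^ 2) / 2)).comp x hq
    have := (hexp.neg).div_const b
    refine this.congr_deriv ?_
    rw [hv'']
    field_simp
  have hprod : ∀ x : ℝ, u' x * v x
      = (-(1 / (b * Real.sqrt (2 * π)))) * Real.exp (-((1 + b) * x ^ 2) / 2) := by
    intro x
    rw [hu', hv']
    rw [show -((1 + b) * x ^ 2) / 2 = (-x ^ 2 / 2) + (-(b * x ^ 2) / 2) by ring, Real.exp_add]
    field_simp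
  have huv' : Integrable (fun x => stdNormalCDF x * v' x) :=
    (integrable_mul_gauss hb).bdd_mul cdf_continuous.aestronglyMeasurable
      (c := 1) (Filter.Eventually.of_forall fun x => by simpa using cdf_abs_le_one x)
  have hu'v : Integrable (fun x => u' x * v x) := by
    refine (((integrable_quad h1b).const_mul (-(1 / (b * Real.sqrt (2 * π))))).congr
      (Filter.Eventually.of_forall fun x => (hprod x).symm))
  have hvint : Integrable v := by
    refine ((integrable_quad hb).const_mul (-(1/b))).congr
      (Filter.Eventually.of_forall fun x => ?_)
    rw [hv']
    ring
  have huv : Integrable (fun x => stdNormalCDF x * v x) :=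
    hvint.bdd_mul cdf_continuous.aestronglyMeasurable
      (c := 1) (Filter.Eventually.of_forall fun x => by simpa using cdf_abs_le_one x)
  have key := integral_mul_deriv_eq_deriv_mul_of_integrable (u := stdNormalCDF) (v := v)
    (fun x _ => hu x) (fun x _ => hv x) huv' hu'v huv
  rw [key]
  have : (∫ x : ℝ, u' x * v x)
      = (-(1 / (b * Real.sqrt (2 * π)))) * Real.sqrt (2 * π / (1 + b)) := by
    rw [MeasureTheory.integral_congr_ae (Filter.Eventually.of_forall hprod),
      MeasureTheory.integral_const_mul, integral_quad h1b]
  rw [this]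
  have hsq : Real.sqrt (2 * π / (1 + b)) = Real.sqrt (2 * π) / Real.sqrt (1 + b) :=
    Real.sqrt_div (by positivity) _
  rw [hsq]
  have h1bne : Real.sqrt (1 + b) ≠ 0 := (Real.sqrt_pos.2 h1b).ne'
  field_simp

end Krusk

namespace Krusk

lemma arctan_hasDeriv (c : ℝ) :
    HasDerivAt (fun c : ℝ => 1 / 4 + (1 / (2 * π)) * Real.arctan (c / Real.sqrt (2 + c ^ 2)))
      ((1 / (2 * π)) * (1 / ((1 + c ^ 2) * Real.sqrt (2 + c ^ 2)))) c := by
  have h2c : (0:ℝ) < 2 + c ^ 2 := by positivity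
  have hr0 : Real.sqrt (2 + c ^ 2) ≠ 0 := (Real.sqrt_pos.2 h2c).ne'
  have hsq : Real.sqrt (2 + c ^ 2) ^ 2 = 2 + c ^ 2 := Real.sq_sqrt h2c.le
  have hs : HasDerivAt (fun c : ℝ => Real.sqrt (2 + c ^ 2)) (c / Real.sqrt (2 + c ^ 2)) c := by
    have hinner : HasDerivAt (fun c : ℝ => 2 + c ^ 2) (2 * c) c := by
      simpa using (hasDerivAt_pow 2 c).const_add 2
    have := (Real.hasDerivAt_sqrt h2c.ne').comp c hinner
    refine this.congr_deriv ?_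
    field_simp
  have hg : HasDerivAt (fun c : ℝ => c / Real.sqrt (2 + c ^ 2))
      (2 / ((2 + c ^ 2) * Real.sqrt (2 + c ^ 2))) c := by
    have := (hasDerivAt_id c).div hs hr0
    refine this.congr_deriv ?_
    rw [hsq, id_eq]
    field_simp
    nlinarith [hsq]
  have ha := (Real.hasDerivAt_arctan (c / Real.sqrt (2 + c ^ 2))).comp c hg
  have hfinal := (ha.const_mul (1 / (2 * π))).const_add (1 / 4)
  refine hfinal.congr_deriv ?_
  have h1 : (c / Real.sqrt (2 + c ^ 2)) ^ 2 = c ^ 2 / (2 + c ^ 2) := by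
    rw [div_pow, hsq]
  rw [h1]
  have h2 : (0:ℝ) < 1 + c ^ 2 := by positivity
  field_simp
  nlinarith [hsq, Real.sqrt_pos.2 h2c]

lemma K_eq (c : ℝ) :
    (∫ x : ℝ, stdNormalCDF x * stdNormalCDF (c * x)
        * ((1 / Real.sqrt (2 * π)) * Real.exp (-x ^ 2 / 2)))
      = 1 / 4 + (1 / (2 * π)) * Real.arctan (c / Real.sqrt (2 + c ^ 2)) := by
  have h2πne : Real.sqrt (2 * π) ≠ 0 := sq2pi_pos.ne'
  have hmulself : Real.sqrt (2 * π) * Real.sqrt (2 * π) = 2 * π :=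
    Real.mul_self_sqrt (by positivity)
  set K : ℝ → ℝ := fun c => ∫ x : ℝ, stdNormalCDF x * stdNormalCDF (c * x)
    * ((1 / Real.sqrt (2 * π)) * Real.exp (-x ^ 2 / 2)) with hK
  set R : ℝ → ℝ := fun c => 1 / 4 + (1 / (2 * π))
    * Real.arctan (c / Real.sqrt (2 + c ^ 2)) with hR
  have habs : Integrable (fun x : ℝ => |x| * Real.exp (-x ^ 2 / 2)) := by
    refine (integrable_mul_gauss one_pos).abs.congr
      (Filter.Eventually.of_forall fun x => ?_)
    simp [abs_mul, Real.abs_exp]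
  have hdens_cont : Continuous fun x : ℝ =>
      (1 / Real.sqrt (2 * π)) * Real.exp (-x ^ 2 / 2) := by continuity
  have hKint : ∀ c : ℝ, Integrable (fun x : ℝ => stdNormalCDF x * stdNormalCDF (c * x)
      * ((1 / Real.sqrt (2 * π)) * Real.exp (-x ^ 2 / 2))) := by
    intro c
    have hbase : Integrable (fun x : ℝ =>
        (1 / Real.sqrt (2 * π)) * Real.exp (-x ^ 2 / 2)) := by
      refine ((integrable_gauss one_pos).const_mul (1 / Real.sqrt (2 * π))).congr
        (Filter.Eventually.of_forall fun x => by norm_num)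
    refine hbase.bdd_mul ((cdf_continuous.mul
      (cdf_continuous.comp (continuous_const.mul continuous_id))).aestronglyMeasurable) (c := 1) ?_
    refine Filter.Eventually.of_forall fun x => ?_
    rw [Real.norm_eq_abs, abs_mul]
    calc |stdNormalCDF x| * |stdNormalCDF (c * x)| ≤ 1 * 1 :=
          mul_le_mul (cdf_abs_le_one x) (cdf_abs_le_one (c * x)) (abs_nonneg _) zero_le_one
      _ = 1 := by norm_num
  have hKd : ∀ c : ℝ, HasDerivAt K
      ((1 / (2 * π)) * (1 / ((1 + c ^ 2) * Real.sqrt (2 + c ^ 2)))) c := by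
    intro c₀
    have main := hasDerivAt_integral_of_dominated_loc_of_deriv_le (μ := volume) (𝕜 := ℝ)
      (F := fun c x => stdNormalCDF x * stdNormalCDF (c * x)
        * ((1 / Real.sqrt (2 * π)) * Real.exp (-x ^ 2 / 2)))
      (F' := fun c x => stdNormalCDF x
        * ((1 / Real.sqrt (2 * π)) * Real.exp (-(c * x) ^ 2 / 2) * x)
        * ((1 / Real.sqrt (2 * π)) * Real.exp (-x ^ 2 / 2)))
      (x₀ := c₀) (bound := fun x => (1 / (2 * π)) * (|x| * Real.exp (-x ^ 2 / 2)))
      (Metric.ball_mem_nhds _ one_pos)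
      (Filter.Eventually.of_forall fun c => (hKint c).aestronglyMeasurable)
      (hKint c₀)
      (((cdf_continuous.mul ((continuous_const.mul (by continuity)).mul
        continuous_id)).mul hdens_cont).aestronglyMeasurable)
      (Filter.Eventually.of_forall fun x => fun c _hc => ?_)
      (habs.const_mul _)
      (Filter.Eventually.of_forall fun x => fun c _hc => ?_)
    · have h2 := main.2
      have hptval : (∫ x : ℝ, stdNormalCDF x
          * ((1 / Real.sqrt (2 * π)) * Real.exp (-(c₀ * x) ^ 2 / 2) * x)
          * ((1 / Real.sqrt (2 * π)) * Real.exp (-x ^ 2 / 2)))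
          = (1 / (2 * π)) * (1 / ((1 + c₀ ^ 2) * Real.sqrt (2 + c₀ ^ 2))) := by
        have hptw : ∀ x : ℝ, stdNormalCDF x
            * ((1 / Real.sqrt (2 * π)) * Real.exp (-(c₀ * x) ^ 2 / 2) * x)
            * ((1 / Real.sqrt (2 * π)) * Real.exp (-x ^ 2 / 2))
            = (1 / (2 * π)) * (stdNormalCDF x
              * (x * Real.exp (-((1 + c₀ ^ 2) * x ^ 2) / 2))) := by
          intro x
          rw [show -((1 + c₀ ^ 2) * x ^ 2) / 2 = (-(c₀ * x) ^ 2 / 2) + (-x ^ 2 / 2) by ring,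
            Real.exp_add,
            show (1:ℝ) / (2 * π) = 1 / Real.sqrt (2 * π) * (1 / Real.sqrt (2 * π)) from
              (by rw [one_div_mul_one_div, hmulself])]
          ring
        rw [MeasureTheory.integral_congr_ae (Filter.Eventually.of_forall hptw),
          MeasureTheory.integral_const_mul, parts (by positivity : (0:ℝ) < 1 + c₀ ^ 2)]
        rw [show (1:ℝ) + (1 + c₀ ^ 2) = 2 + c₀ ^ 2 by ring]
      rwa [hptval] at h2
    · -- bound
      have e1 : Real.exp (-(c * x) ^ 2 / 2) ≤ 1 :=
        Real.exp_le_one_iff.2 (by nlinarith [sq_nonneg (c * x)])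
      have hnn : (0:ℝ) ≤ (1 / Real.sqrt (2 * π)) * Real.exp (-(c * x) ^ 2 / 2) := by positivity
      rw [Real.norm_eq_abs, abs_mul, abs_mul]
      have h1 : |stdNormalCDF x| ≤ 1 := cdf_abs_le_one x
      have h2 : |(1 / Real.sqrt (2 * π)) * Real.exp (-(c * x) ^ 2 / 2) * x|
          ≤ (1 / Real.sqrt (2 * π)) * |x| := by
        rw [abs_mul, abs_of_nonneg hnn]
        calc (1 / Real.sqrt (2 * π)) * Real.exp (-(c * x) ^ 2 / 2) * |x|
            ≤ ((1 / Real.sqrt (2 * π)) * 1) * |x| := by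
              apply mul_le_mul_of_nonneg_right _ (abs_nonneg x)
              exact mul_le_mul_of_nonneg_left e1 (by positivity)
          _ = (1 / Real.sqrt (2 * π)) * |x| := by rw [mul_one]
      have h3 : |(1 / Real.sqrt (2 * π)) * Real.exp (-x ^ 2 / 2)|
          = (1 / Real.sqrt (2 * π)) * Real.exp (-x ^ 2 / 2) := abs_of_nonneg (by positivity)
      rw [h3]
      calc |stdNormalCDF x| * |(1 / Real.sqrt (2 * π)) * Real.exp (-(c * x) ^ 2 / 2) * x|
            * ((1 / Real.sqrt (2 * π)) * Real.exp (-x ^ 2 / 2))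
          ≤ 1 * ((1 / Real.sqrt (2 * π)) * |x|)
            * ((1 / Real.sqrt (2 * π)) * Real.exp (-x ^ 2 / 2)) := by
            apply mul_le_mul_of_nonneg_right _ (by positivity)
            exact mul_le_mul h1 h2 (abs_nonneg _) zero_le_one
        _ = (1 / Real.sqrt (2 * π)) * (1 / Real.sqrt (2 * π)) * (|x| * Real.exp (-x ^ 2 / 2)) := by
            ring
        _ = (1 / (2 * π)) * (|x| * Real.exp (-x ^ 2 / 2)) := by
            rw [show (1 / Real.sqrt (2 * π)) * (1 / Real.sqrt (2 * π))
              = 1 / (Real.sqrt (2 * π) * Real.sqrt (2 * π)) by ring, hmulself]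
    · -- differentiability in the parameter
      have h1 : HasDerivAt (fun c : ℝ => c * x) x c := hasDerivAt_mul_const x
      have h2 : HasDerivAt (fun c : ℝ => stdNormalCDF (c * x))
          ((1 / Real.sqrt (2 * π)) * Real.exp (-(c * x) ^ 2 / 2) * x) c :=
        by have := (hasDerivAt_cdf (c * x)).comp c h1; exact this
      have h3 := (h2.const_mul (stdNormalCDF x)).mul_const
        ((1 / Real.sqrt (2 * π)) * Real.exp (-x ^ 2 / 2))
      convert h3 using 2 <;> ring
  have hRd : ∀ c : ℝ, HasDerivAt R
      ((1 / (2 * π)) * (1 / ((1 + c ^ 2) * Real.sqrt (2 + c ^ 2)))) c :=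
    fun c => arctan_hasDeriv c
  have key : ∀ c₀ : ℝ, K c₀ - R c₀ = K 0 - R 0 := by
    intro c₀
    have hdiff : Differentiable ℝ (fun c => K c - R c) :=
      fun c => ((hKd c).sub (hRd c)).differentiableAt
    have hderiv : ∀ c : ℝ, deriv (fun c => K c - R c) c = 0 := by
      intro c
      rw [HasDerivAt.deriv (f := fun c => K c - R c) ((hKd c).sub (hRd c))]
      ring
    exact is_const_of_deriv_eq_zero hdiff hderiv c₀ 0
  have hK0 : K 0 = 1 / 4 := by
    rw [hK]
    beta_reduce
    have hptw : ∀ x : ℝ, stdNormalCDF x * stdNormalCDF ((0:ℝ) * x)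
        * ((1 / Real.sqrt (2 * π)) * Real.exp (-x ^ 2 / 2))
        = (1 / (2 * Real.sqrt (2 * π))) * (stdNormalCDF x * Real.exp (-x ^ 2 / (2 * 1))) := by
      intro x
      rw [zero_mul, cdf_zero, mul_one]
      ring
    rw [MeasureTheory.integral_congr_ae (Filter.Eventually.of_forall hptw),
      MeasureTheory.integral_const_mul, integral_cdf_gauss one_pos, mul_one]
    field_simp
    ring
  have hR0 : R 0 = 1 / 4 := by
    rw [hR]
    simp [Real.arctan_zero]
  have hfin := key c
  rw [hK0, hR0, sub_self] at hfin
  exact sub_eq_zero.1 hfin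

end Krusk


theorem transformed_covariance_normalCDF_kruskal
    (σij : ℝ) (h : |σij| < 1) :
    transCov 1 1 σij stdNormalCDF stdNormalCDF = (1 / (2 * π)) * Real.arcsin (σij / 2) ∧
    (∫ q : ℝ × ℝ, stdNormalCDF q.1 * stdNormalCDF q.2 * gaussPDF2 1 1 σij q.1 q.2) - 1 / 4 =
      (1 / (2 * π)) * Real.arcsin (σij / 2) := by
  have habs := abs_lt.1 h
  have hs : (0:ℝ) < 1 - σij ^ 2 := by nlinarith
  have h2s : (0:ℝ) < 2 - σij ^ 2 := by nlinarith
  have h4s : (0:ℝ) < 4 - σij ^ 2 := by nlinarith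
  have h2πpos : (0:ℝ) < Real.sqrt (2 * π) := Krusk.sq2pi_pos
  have h2πne : Real.sqrt (2 * π) ≠ 0 := h2πpos.ne'
  have hmulself : Real.sqrt (2 * π) * Real.sqrt (2 * π) = 2 * π :=
    Real.mul_self_sqrt (by positivity)
  have h2πs_ne : Real.sqrt (2 * π * (1 - σij ^ 2)) ≠ 0 :=
    (Real.sqrt_pos.2 (by positivity)).ne'
  have hsqs_ne : Real.sqrt (2 - σij ^ 2) ≠ 0 := (Real.sqrt_pos.2 h2s).ne'
  have hsq4_ne : Real.sqrt (4 - σij ^ 2) ≠ 0 := (Real.sqrt_pos.2 h4s).ne'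
  set c : ℝ := σij / Real.sqrt (2 - σij ^ 2) with hc
  -- decomposition of the bivariate density
  have hdecomp : ∀ x w : ℝ, gaussPDF2 1 1 σij x w
      = ((1 / Real.sqrt (2 * π)) * Real.exp (-x ^ 2 / 2))
        * ((1 / Real.sqrt (2 * π * (1 - σij ^ 2)))
          * Real.exp (-(w - σij * x) ^ 2 / (2 * (1 - σij ^ 2)))) := by
    intro x w
    rw [gaussPDF2]
    rw [show (1 * 1 - σij ^ 2 : ℝ) = 1 - σij ^ 2 by ring]
    rw [show -(1 * x ^ 2 - 2 * σij * x * w + 1 * w ^ 2) / (2 * (1 - σij ^ 2))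
        = (-x ^ 2 / 2) + (-(w - σij * x) ^ 2 / (2 * (1 - σij ^ 2))) by
      field_simp
      ring]
    rw [Real.exp_add]
    have hpre : Real.sqrt (2 * π) * Real.sqrt (2 * π * (1 - σij ^ 2))
        = 2 * π * Real.sqrt (1 - σij ^ 2) := by
      rw [Real.sqrt_mul (by positivity) (1 - σij ^ 2), ← mul_assoc, hmulself]
    rw [show (1:ℝ) / (2 * π * Real.sqrt (1 - σij ^ 2))
        = (1 / Real.sqrt (2 * π)) * (1 / Real.sqrt (2 * π * (1 - σij ^ 2))) by
      rw [one_div_mul_one_div, hpre]]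
    ring
  -- continuity of the full integrand
  have hp_cont : Continuous fun q : ℝ × ℝ => gaussPDF2 1 1 σij q.1 q.2 := by
    unfold gaussPDF2
    fun_prop
  have hFcont : Continuous fun q : ℝ × ℝ =>
      stdNormalCDF q.1 * stdNormalCDF q.2 * gaussPDF2 1 1 σij q.1 q.2 :=
    ((Krusk.cdf_continuous.comp continuous_fst).mul
      (Krusk.cdf_continuous.comp continuous_snd)).mul hp_cont
  have hFnonneg : ∀ q : ℝ × ℝ,
      0 ≤ stdNormalCDF q.1 * stdNormalCDF q.2 * gaussPDF2 1 1 σij q.1 q.2 := by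
    intro q
    have h1 : 0 ≤ gaussPDF2 1 1 σij q.1 q.2 := by
      rw [gaussPDF2]
      positivity
    exact mul_nonneg (mul_nonneg (Krusk.cdf_nonneg _) (Krusk.cdf_nonneg _)) h1
  -- inner integral
  have hw : ∀ x : ℝ, (∫ w : ℝ, stdNormalCDF w
      * Real.exp (-(w - σij * x) ^ 2 / (2 * (1 - σij ^ 2))))
      = Real.sqrt (2 * π * (1 - σij ^ 2)) * stdNormalCDF (c * x) := by
    intro x
    have hshift := integral_add_right_eq_self (μ := volume)
      (fun w => stdNormalCDF w * Real.exp (-(w - σij * x) ^ 2 / (2 * (1 - σij ^ 2)))) (σij * x)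
    rw [← hshift]
    simp only [add_sub_cancel_right]
    rw [show (fun w : ℝ => stdNormalCDF (w + σij * x)
          * Real.exp (-w ^ 2 / (2 * (1 - σij ^ 2))))
        = fun w : ℝ => stdNormalCDF (σij * x + w)
          * Real.exp (-w ^ 2 / (2 * (1 - σij ^ 2))) by
      funext w
      rw [add_comm]]
    rw [Krusk.cdf_conv hs (σij * x)]
    congr 2
    rw [show (1:ℝ) + (1 - σij ^ 2) = 2 - σij ^ 2 by ring, hc]
    ring
  have hinner_int : ∀ x : ℝ, Integrable (fun w : ℝ =>
      stdNormalCDF x * stdNormalCDF w * gaussPDF2 1 1 σij x w) := by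
    intro x
    have h1 : Integrable (fun w : ℝ =>
        Real.exp (-(w - σij * x) ^ 2 / (2 * (1 - σij ^ 2)))) :=
      (Krusk.integrable_gauss hs).comp_sub_right (σij * x)
    have h2 : Integrable (fun w : ℝ => stdNormalCDF w
        * Real.exp (-(w - σij * x) ^ 2 / (2 * (1 - σij ^ 2)))) :=
      h1.bdd_mul Krusk.cdf_continuous.aestronglyMeasurable
        (c := 1) (Filter.Eventually.of_forall fun w => by simpa using Krusk.cdf_abs_le_one w)
    refine (h2.const_mul (stdNormalCDF x * ((1 / Real.sqrt (2 * π))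
        * Real.exp (-x ^ 2 / 2)) * (1 / Real.sqrt (2 * π * (1 - σij ^ 2))))).congr
      (Filter.Eventually.of_forall fun w => ?_)
    beta_reduce
    rw [hdecomp x w]
    ring
  have hinner : ∀ x : ℝ, (∫ w : ℝ, stdNormalCDF x * stdNormalCDF w * gaussPDF2 1 1 σij x w)
      = stdNormalCDF x * stdNormalCDF (c * x)
        * ((1 / Real.sqrt (2 * π)) * Real.exp (-x ^ 2 / 2)) := by
    intro x
    have hptw : ∀ w : ℝ, stdNormalCDF x * stdNormalCDF w * gaussPDF2 1 1 σij x w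
        = (stdNormalCDF x * ((1 / Real.sqrt (2 * π)) * Real.exp (-x ^ 2 / 2))
            * (1 / Real.sqrt (2 * π * (1 - σij ^ 2))))
          * (stdNormalCDF w * Real.exp (-(w - σij * x) ^ 2 / (2 * (1 - σij ^ 2)))) := by
      intro w
      rw [hdecomp x w]
      ring
    rw [MeasureTheory.integral_congr_ae (Filter.Eventually.of_forall hptw),
      MeasureTheory.integral_const_mul, hw x]
    field_simp
  -- integrability on the product space
  have hFint : Integrable (fun q : ℝ × ℝ =>
      stdNormalCDF q.1 * stdNormalCDF q.2 * gaussPDF2 1 1 σij q.1 q.2)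
      (volume.prod volume) := by
    have hmeas : AEStronglyMeasurable (fun q : ℝ × ℝ =>
        stdNormalCDF q.1 * stdNormalCDF q.2 * gaussPDF2 1 1 σij q.1 q.2)
        (volume.prod volume) := by
      have : (volume : Measure (ℝ × ℝ)) = volume.prod volume := Measure.volume_eq_prod ℝ ℝ
      rw [← this]
      exact hFcont.aestronglyMeasurable
    refine (integrable_prod_iff hmeas).2 ⟨?_, ?_⟩
    · exact Filter.Eventually.of_forall fun x => hinner_int x
    · have heq : ∀ x : ℝ, (∫ w : ℝ,
          ‖stdNormalCDF x * stdNormalCDF w * gaussPDF2 1 1 σij x w‖)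
          = stdNormalCDF x * stdNormalCDF (c * x)
            * ((1 / Real.sqrt (2 * π)) * Real.exp (-x ^ 2 / 2)) := by
        intro x
        rw [MeasureTheory.integral_congr_ae (Filter.Eventually.of_forall fun w =>
          Real.norm_of_nonneg (hFnonneg (x, w)))]
        exact hinner x
      have hbase : Integrable (fun x : ℝ =>
          (1 / Real.sqrt (2 * π)) * Real.exp (-x ^ 2 / 2)) := by
        refine ((Krusk.integrable_gauss one_pos).const_mul (1 / Real.sqrt (2 * π))).congr
          (Filter.Eventually.of_forall fun x => by norm_num)
      have hint2 : Integrable (fun x : ℝ => stdNormalCDF x * stdNormalCDF (c * x)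
          * ((1 / Real.sqrt (2 * π)) * Real.exp (-x ^ 2 / 2))) := by
        refine hbase.bdd_mul ((Krusk.cdf_continuous.mul (Krusk.cdf_continuous.comp
          (continuous_const.mul continuous_id))).aestronglyMeasurable) (c := 1) (Filter.Eventually.of_forall fun x => ?_)
        rw [Real.norm_eq_abs, abs_mul]
        calc |stdNormalCDF x| * |stdNormalCDF (c * x)| ≤ 1 * 1 :=
              mul_le_mul (Krusk.cdf_abs_le_one x) (Krusk.cdf_abs_le_one (c * x))
                (abs_nonneg _) zero_le_one
          _ = 1 := by norm_num
      exact hint2.congr (Filter.Eventually.of_forall fun x => (heq x).symm)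
  -- Fubini
  have hG : (∫ q : ℝ × ℝ, stdNormalCDF q.1 * stdNormalCDF q.2 * gaussPDF2 1 1 σij q.1 q.2)
      = 1 / 4 + (1 / (2 * π)) * Real.arcsin (σij / 2) := by
    have hfub : (∫ q : ℝ × ℝ, stdNormalCDF q.1 * stdNormalCDF q.2 * gaussPDF2 1 1 σij q.1 q.2)
        = ∫ x : ℝ, ∫ w : ℝ, stdNormalCDF x * stdNormalCDF w * gaussPDF2 1 1 σij x w := by
      rw [show (volume : Measure (ℝ × ℝ)) = volume.prod volume from Measure.volume_eq_prod ℝ ℝ]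
      exact MeasureTheory.integral_prod _ hFint
    rw [hfub,
      MeasureTheory.integral_congr_ae (Filter.Eventually.of_forall hinner),
      Krusk.K_eq c]
    congr 2
    -- arctan argument equals arcsin value
    have hc2 : c ^ 2 = σij ^ 2 / (2 - σij ^ 2) := by
      rw [hc, div_pow, Real.sq_sqrt h2s.le]
    have h2c2 : 2 + c ^ 2 = (4 - σij ^ 2) / (2 - σij ^ 2) := by
      rw [hc2]
      field_simp
      ring
    have harg : c / Real.sqrt (2 + c ^ 2) = σij / Real.sqrt (4 - σij ^ 2) := by
      rw [h2c2, Real.sqrt_div h4s.le, hc]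
      field_simp
    have harcsin : Real.arcsin (σij / 2) = Real.arctan (σij / Real.sqrt (4 - σij ^ 2)) := by
      have hmem : σij / 2 ∈ Set.Ioo (-1 : ℝ) 1 := by
        constructor <;> [linarith [habs.1]; linarith [habs.2]]
      rw [Real.arcsin_eq_arctan hmem]
      congr 1
      rw [show (1 : ℝ) - (σij / 2) ^ 2 = (4 - σij ^ 2) / 4 by ring,
        Real.sqrt_div h4s.le,
        show Real.sqrt 4 = 2 by
          rw [show (4:ℝ) = 2 ^ 2 by norm_num, Real.sqrt_sq (by norm_num : (0:ℝ) ≤ 2)]]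
      field_simp
    rw [harg, harcsin]
  -- the transformed mean
  have hmean : transMean 1 stdNormalCDF = 1 / 2 := by
    rw [transMean]
    have hptw : ∀ x : ℝ, stdNormalCDF x * gaussPDF1 1 x
        = (1 / Real.sqrt (2 * π * 1)) * (stdNormalCDF x * Real.exp (-x ^ 2 / (2 * 1))) := by
      intro x
      rw [gaussPDF1]
      ring
    rw [MeasureTheory.integral_congr_ae (Filter.Eventually.of_forall hptw),
      MeasureTheory.integral_const_mul, Krusk.integral_cdf_gauss one_pos, mul_one]
    field_simp
  constructor
  · rw [transCov, hmean, hG]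
    ring
  · rw [hG]
    ring
end

section
/- Let n ≥ 1 and f(x) := x^{2n}/(2n)!. Then the transformed covariance satisfies τ(f,f) = (σiiⁿ·σjjⁿ/2^{2n})·Σ_{k=1}^{n} (1/((n−k)!²·(2k)!))·(4·σij²/(σii·σjj))ᵏ. -/
open MeasureTheory Real

open Set Polynomial


lemma Gamma_nat_add_half (k : ℕ) :
    Real.Gamma ((k : ℝ) + 1 / 2) = (2 * k).factorial * Real.sqrt π / (4 ^ k * k.factorial) := by
  induction k with
  | zero =>
    have := Real.Gamma_one_half_eq
    norm_num at this ⊢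
    simpa using this
  | succ k ih =>
    have h : ((k : ℝ) + 1) + 1 / 2 = ((k : ℝ) + 1 / 2) + 1 := by ring
    push_cast
    rw [h, Real.Gamma_add_one (by positivity), ih]
    have h4 : (4 : ℝ) ^ (k + 1) = 4 * 4 ^ k := by ring
    rw [Nat.factorial_succ]
    have : (2 * (k + 1)).factorial = (2 * k + 2) * ((2 * k + 1) * (2 * k).factorial) := by
      rw [show 2 * (k + 1) = (2 * k + 1) + 1 by ring, Nat.factorial_succ, Nat.factorial_succ]
    rw [this]
    push_cast
    field_simp
    ring

lemma integral_comp_neg' (f : ℝ → ℝ) : ∫ x : ℝ, f (-x) = ∫ x : ℝ, f x := by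
  have A : MeasurableEmbedding fun x : ℝ => -x :=
    (Homeomorph.neg ℝ).measurableEmbedding
  rw [← A.integral_map, Measure.map_neg_eq_self]

lemma integrable_pow_mul_exp {b : ℝ} (hb : 0 < b) (m : ℕ) :
    Integrable fun x : ℝ => x ^ m * Real.exp (-b * x ^ 2) := by
  have := integrable_rpow_mul_exp_neg_mul_sq hb (s := (m : ℝ)) (lt_of_lt_of_le neg_one_lt_zero (by positivity))
  simpa [Real.rpow_natCast] using this

lemma integrable_pow_mul_gauss {σ : ℝ} (hσ : 0 < σ) (m : ℕ) :
    Integrable fun x : ℝ => x ^ m * gaussPDF1 σ x := by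
  have hb : 0 < 1 / (2 * σ) := by positivity
  have h := (integrable_pow_mul_exp hb m).const_mul (1 / Real.sqrt (2 * π * σ))
  refine h.congr (Filter.Eventually.of_forall fun x => ?_)
  show _ = x ^ m * gaussPDF1 σ x
  unfold gaussPDF1
  rw [show -x ^ 2 / (2 * σ) = -(1/(2*σ)) * x ^ 2 by ring]
  ring

lemma gauss_moment_even {σ : ℝ} (hσ : 0 < σ) (k : ℕ) :
    ∫ x : ℝ, x ^ (2 * k) * gaussPDF1 σ x
      = σ ^ k * (2 * k).factorial / (2 ^ k * k.factorial) := by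
  have hb : 0 < 1 / (2 * σ) := by positivity
  have h2σ : (0:ℝ) < 2 * σ := by positivity
  -- step 1: pull out constant
  have e1 : ∫ x : ℝ, x ^ (2 * k) * gaussPDF1 σ x
      = (1 / Real.sqrt (2 * π * σ)) * ∫ x : ℝ, x ^ (2 * k) * Real.exp (-(1/(2*σ)) * x ^ 2) := by
    rw [← integral_const_mul]
    congr 1; funext x
    unfold gaussPDF1
    rw [show -x ^ 2 / (2 * σ) = -(1/(2*σ)) * x ^ 2 by ring]
    ring
  rw [e1]
  -- step 2: even symmetry
  have e2 : ∫ x : ℝ, x ^ (2 * k) * Real.exp (-(1/(2*σ)) * x ^ 2)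
      = 2 * ∫ x in Ioi (0:ℝ), x ^ (2 * k) * Real.exp (-(1/(2*σ)) * x ^ 2) := by
    rw [← integral_comp_abs (f := fun x => x ^ (2 * k) * Real.exp (-(1/(2*σ)) * x ^ 2))]
    congr 1; funext x
    rw [(even_two_mul k).pow_abs, sq_abs]
  rw [e2]
  -- step 3: Gamma evaluation
  have e3 : ∫ x in Ioi (0:ℝ), x ^ (2 * k) * Real.exp (-(1/(2*σ)) * x ^ 2)
      = (1/(2*σ)) ^ (-(((2 * k : ℕ) : ℝ) + 1) / 2) * (1 / 2) * Real.Gamma ((((2 * k : ℕ) : ℝ) + 1) / 2) := by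
    rw [← integral_rpow_mul_exp_neg_mul_rpow two_pos (lt_of_lt_of_le neg_one_lt_zero (by positivity)) hb]
    refine setIntegral_congr_fun measurableSet_Ioi (fun x hx => ?_)
    rw [← Real.rpow_natCast x (2 * k), ← Real.rpow_natCast x 2]
    norm_num
  rw [e3]
  have hΓarg : ((((2 * k : ℕ) : ℝ)) + 1) / 2 = (k : ℝ) + 1 / 2 := by push_cast; ring
  rw [hΓarg, _root_.Gamma_nat_add_half]
  have hrpow : (1/(2*σ)) ^ (-(((2 * k : ℕ) : ℝ) + 1) / 2) = (2*σ) ^ k * Real.sqrt (2*σ) := by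
    rw [one_div, Real.inv_rpow h2σ.le, ← Real.rpow_neg h2σ.le]
    rw [show (-((((2 * k : ℕ) : ℝ)) + 1) / 2) = -((k:ℝ) + 1/2) by push_cast; ring, neg_neg]
    rw [Real.rpow_add h2σ, Real.rpow_natCast, Real.sqrt_eq_rpow]
  rw [hrpow]
  have hsqrt : Real.sqrt (2 * π * σ) = Real.sqrt (2 * σ) * Real.sqrt π := by
    rw [← Real.sqrt_mul h2σ.le]; ring_nf
  rw [hsqrt]
  have h1 : (0:ℝ) < Real.sqrt (2*σ) := Real.sqrt_pos.mpr h2σ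
  have h2 : (0:ℝ) < Real.sqrt π := Real.sqrt_pos.mpr pi_pos
  have h3 : ((2*σ):ℝ)^k = 2^k * σ^k := mul_pow 2 σ k
  have h4 : (4:ℝ)^k = 2^k * 2^k := by rw [← mul_pow]; norm_num
  have h5 : (0:ℝ) < (k.factorial : ℝ) := by exact_mod_cast k.factorial_pos
  rw [h3, h4]
  field_simp

lemma gauss_moment_odd {σ : ℝ} (k : ℕ) :
    ∫ x : ℝ, x ^ (2 * k + 1) * gaussPDF1 σ x = 0 := by
  set g : ℝ → ℝ := fun x => x ^ (2 * k + 1) * gaussPDF1 σ x with hg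
  have h : ∀ x : ℝ, g (-x) = - g x := by
    intro x
    simp only [hg, gaussPDF1]
    rw [Odd.neg_pow ⟨k, by ring⟩, neg_pow, Even.neg_pow (by norm_num)]
    ring
  have h2 : ∫ x : ℝ, g x = - ∫ x : ℝ, g x := by
    conv_lhs => rw [← integral_comp_neg' g]
    simp_rw [h]
    exact integral_neg g
  linarith

noncomputable def gmom (c : ℝ) (i : ℕ) : ℝ := ∫ x : ℝ, x ^ i * gaussPDF1 c x

lemma gauss_shift_moment {c : ℝ} (hc : 0 < c) (N : ℕ) (m : ℝ) :
    ∫ w : ℝ, w ^ (2 * N) * gaussPDF1 c (w - m)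
      = ∑ j ∈ Finset.range (N + 1),
          ((2 * N).choose (2 * j) : ℝ) * m ^ (2 * N - 2 * j)
            * (c ^ j * (2 * j).factorial / (2 ^ j * j.factorial)) := by
  have e1 : ∫ w : ℝ, w ^ (2 * N) * gaussPDF1 c (w - m)
      = ∫ x : ℝ, (x + m) ^ (2 * N) * gaussPDF1 c x := by
    rw [← integral_add_right_eq_self (fun w => w ^ (2 * N) * gaussPDF1 c (w - m)) m]
    simp
  rw [e1]
  have e2 : ∀ x : ℝ, (x + m) ^ (2 * N) * gaussPDF1 c x
      = ∑ i ∈ Finset.range (2 * N + 1),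
          (m ^ (2 * N - i) * ((2 * N).choose i : ℝ)) * (x ^ i * gaussPDF1 c x) := by
    intro x
    rw [add_pow, Finset.sum_mul]
    exact Finset.sum_congr rfl fun i _ => by ring
  simp_rw [e2]
  rw [MeasureTheory.integral_finset_sum _
    (fun i _ => ((integrable_pow_mul_gauss hc i).const_mul _))]
  simp_rw [MeasureTheory.integral_const_mul]
  have hsub : (Finset.range (N + 1)).image (fun j => 2 * j) ⊆ Finset.range (2 * N + 1) := by
    intro i hi
    obtain ⟨j, hj, rfl⟩ := Finset.mem_image.mp hi
    simp only [Finset.mem_range] at hj ⊢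
    omega
  have hzero : ∀ i ∈ Finset.range (2 * N + 1),
      i ∉ (Finset.range (N + 1)).image (fun j => 2 * j) →
      (m ^ (2 * N - i) * ((2 * N).choose i : ℝ)) * ∫ x : ℝ, x ^ i * gaussPDF1 c x = 0 := by
    intro i hi hni
    have hodd : Odd i := by
      rcases Nat.even_or_odd i with he | ho
      · exfalso
        obtain ⟨j, rfl⟩ := he
        exact hni (Finset.mem_image.mpr ⟨j, Finset.mem_range.mpr (by
          simp only [Finset.mem_range] at hi; omega), by ring⟩)
      · exact ho
    obtain ⟨j, rfl⟩ := hodd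
    rw [gauss_moment_odd, mul_zero]
  rw [← Finset.sum_subset hsub hzero, Finset.sum_image (fun a _ b _ h => by omega)]
  refine Finset.sum_congr rfl fun j hj => ?_
  rw [gauss_moment_even hc j]
  ring

lemma choose_sq_sum (n m : ℕ) (h : m ≤ n) :
    ((2 * (n + m)).choose (2 * n))
      = ∑ k ∈ Finset.range (m + 1), 4 ^ k * ((n + m).choose (n + k)) * ((n + k).choose (n - k)) := by
  have key : ((X + 1 : Polynomial ℕ) ^ (2 * (n + m))).coeff (2 * n)
      = (2 * (n + m)).choose (2 * n) := coeff_X_add_one_pow ℕ _ _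
  have e2 : (X + 1 : Polynomial ℕ) ^ 2 = X * (X + C 2) + 1 := by
    have : (C 2 : Polynomial ℕ) = 2 := by norm_num
    rw [this]; ring
  have e3 : (X + 1 : Polynomial ℕ) ^ (2 * (n + m)) = ((X + 1) ^ 2) ^ (n + m) := by
    rw [← pow_mul]
  rw [e3, e2, add_pow] at key
  rw [finset_sum_coeff] at key
  have e4 : ∀ r ∈ Finset.range (n + m + 1),
      ((X * (X + C 2)) ^ r * 1 ^ (n + m - r) * ((n + m).choose r : Polynomial ℕ)).coeff (2 * n)
      = 2 ^ (r - (2 * n - r)) * (r.choose (2 * n - r)) * ((n + m).choose r) := by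
    intro r hr
    have hr' : r ≤ 2 * n := by simp only [Finset.mem_range] at hr; omega
    rw [one_pow, mul_one, ← C_eq_natCast, coeff_mul_C, mul_pow, coeff_X_pow_mul',
      if_pos hr', coeff_X_add_C_pow]
    simp
  rw [Finset.sum_congr rfl e4] at key
  rw [← key]
  nth_rewrite 1 [Finset.range_eq_Ico]
  rw [← Finset.sum_Ico_consecutive _ (Nat.zero_le n) (by omega : n ≤ n + m + 1)]
  have hz : ∑ r ∈ Finset.Ico 0 n, 2 ^ (r - (2 * n - r)) * (r.choose (2 * n - r)) * ((n + m).choose r) = 0 := by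
    refine Finset.sum_eq_zero fun r hr => ?_
    simp only [Finset.mem_Ico] at hr
    rw [Nat.choose_eq_zero_of_lt (by omega), mul_zero, zero_mul]
  rw [hz, zero_add, Finset.sum_Ico_eq_sum_range]
  have hmm : n + m + 1 - n = m + 1 := by omega
  rw [hmm]
  refine Finset.sum_congr rfl fun k hk => ?_
  simp only [Finset.mem_range] at hk
  have h1 : 2 * n - (n + k) = n - k := by omega
  have h2 : n + k - (n - k) = 2 * k := by omega
  rw [h1, h2, pow_mul]
  norm_num
  ring

lemma key_real (n m : ℕ) (h : m ≤ n) :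
    ∑ k ∈ Finset.range (m + 1),
        (4:ℝ) ^ k / ((n - k).factorial * (2 * k).factorial * (m - k).factorial)
      = (2 * (n + m)).factorial /
          ((2 * n).factorial * (2 * m).factorial * (n + m).factorial) := by
  have hN := choose_sq_sum n m h
  have hcast : ((2 * (n + m)).choose (2 * n) : ℝ)
      = (2 * (n + m)).factorial / ((2 * n).factorial * (2 * m).factorial) := by
    rw [Nat.cast_choose ℝ (by omega : 2 * n ≤ 2 * (n + m)),
      show 2 * (n + m) - 2 * n = 2 * m by omega]
  have h2 : ((2 * (n + m)).choose (2 * n) : ℝ)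
      = ∑ k ∈ Finset.range (m + 1),
          (4:ℝ) ^ k * ((n + m).choose (n + k)) * ((n + k).choose (n - k)) := by
    exact_mod_cast congrArg (Nat.cast : ℕ → ℝ) hN
  have h3 : ∀ k ∈ Finset.range (m + 1),
      (4:ℝ) ^ k * ((n + m).choose (n + k)) * ((n + k).choose (n - k))
        = (n + m).factorial *
            ((4:ℝ) ^ k / ((n - k).factorial * (2 * k).factorial * (m - k).factorial)) := by
    intro k hk
    simp only [Finset.mem_range] at hk
    have hk' : k ≤ m := by omega
    rw [Nat.cast_choose ℝ (by omega : n + k ≤ n + m),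
        Nat.cast_choose ℝ (by omega : n - k ≤ n + k)]
    have e1 : n + m - (n + k) = m - k := by omega
    have e2 : n + k - (n - k) = 2 * k := by omega
    rw [e1, e2]
    have p1 : (0:ℝ) < (n + k).factorial := by exact_mod_cast (n + k).factorial_pos
    have p2 : (0:ℝ) < (m - k).factorial := by exact_mod_cast (m - k).factorial_pos
    have p3 : (0:ℝ) < (n - k).factorial := by exact_mod_cast (n - k).factorial_pos
    have p4 : (0:ℝ) < (2 * k).factorial := by exact_mod_cast (2 * k).factorial_pos
    field_simp
  rw [Finset.sum_congr rfl h3, ← Finset.mul_sum] at h2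
  have hfac : (0:ℝ) < (n + m).factorial := by exact_mod_cast (n + m).factorial_pos
  have := h2.symm.trans hcast
  rw [eq_div_iff (by positivity)] at this ⊢
  nlinarith [this]

lemma alg_main (n : ℕ) (S t D : ℝ) (hSt : D = S - t) :
    ∑ j ∈ Finset.range (n + 1),
        ((2 * (2 * n - j)).factorial : ℝ) /
            ((2 * n).factorial * (2 * n - 2 * j).factorial * j.factorial
              * (2 * n - j).factorial * 2 ^ (2 * n)) * t ^ (n - j) * D ^ j
      = ∑ k ∈ Finset.range (n + 1),
          (4:ℝ) ^ k / (4 ^ n * (2 * k).factorial * ((n - k).factorial) ^ 2)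
            * t ^ k * S ^ (n - k) := by
  have hS : S = D + t := by rw [hSt]; ring
  -- expand S^(n-k) binomially on the RHS
  have step1 : ∀ k ∈ Finset.range (n + 1),
      (4:ℝ) ^ k / (4 ^ n * (2 * k).factorial * ((n - k).factorial) ^ 2) * t ^ k * S ^ (n - k)
        = ∑ j ∈ Finset.range (n + 1),
            (4:ℝ) ^ k / (4 ^ n * (2 * k).factorial * ((n - k).factorial) ^ 2)
              * ((n - k).choose j) * D ^ j * t ^ (n - k - j) * t ^ k := by
    intro k hk
    rw [hS, add_pow]
    rw [Finset.mul_sum, ← Finset.sum_subset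
      (Finset.range_subset_range.mpr (by omega : n - k + 1 ≤ n + 1))
      (fun j hj hnj => by
        simp only [Finset.mem_range] at hj hnj
        rw [Nat.choose_eq_zero_of_lt (by omega)]
        push_cast
        ring)]
    refine Finset.sum_congr rfl fun j hj => ?_
    ring
  rw [Finset.sum_congr rfl step1, Finset.sum_comm]
  refine Finset.sum_congr rfl fun j hj => ?_
  simp only [Finset.mem_range] at hj
  have hj' : j ≤ n := by omega
  -- shrink the k-range to n - j + 1
  rw [← Finset.sum_subset (Finset.range_subset_range.mpr (by omega : n - j + 1 ≤ n + 1))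
    (fun k hk hnk => by
      simp only [Finset.mem_range] at hk hnk
      rw [Nat.choose_eq_zero_of_lt (by omega)]
      push_cast
      ring)]
  have step2 : ∀ k ∈ Finset.range (n - j + 1),
      (4:ℝ) ^ k / (4 ^ n * (2 * k).factorial * ((n - k).factorial) ^ 2)
          * ((n - k).choose j) * D ^ j * t ^ (n - k - j) * t ^ k
        = ((4:ℝ) ^ k / ((n - k).factorial * (2 * k).factorial * ((n - j) - k).factorial))
            * (1 / (4 ^ n * j.factorial)) * t ^ (n - j) * D ^ j := by
    intro k hk
    simp only [Finset.mem_range] at hk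
    have hkj : k ≤ n - j := by omega
    have hjk : j ≤ n - k := by omega
    rw [Nat.cast_choose ℝ hjk]
    have e1 : n - k - j = n - j - k := by omega
    have e2 : t ^ (n - k - j) * t ^ k = t ^ (n - j) := by
      rw [← pow_add]
      congr 1
      omega
    have p1 : (0:ℝ) < (n - k).factorial := by exact_mod_cast (n - k).factorial_pos
    have p2 : (0:ℝ) < j.factorial := by exact_mod_cast j.factorial_pos
    have p3 : (0:ℝ) < (n - k - j).factorial := by exact_mod_cast (n - k - j).factorial_pos
    have p4 : (0:ℝ) < (2 * k).factorial := by exact_mod_cast (2 * k).factorial_pos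
    rw [← e2]
    rw [e1] at p3 ⊢
    field_simp
  rw [Finset.sum_congr rfl step2, ← Finset.sum_mul, ← Finset.sum_mul, ← Finset.sum_mul,
    key_real n (n - j) (by omega)]
  have e3 : n + (n - j) = 2 * n - j := by omega
  have e4 : 2 * (n - j) = 2 * n - 2 * j := by omega
  rw [e3, e4]
  have p1 : (0:ℝ) < (2 * n).factorial := by exact_mod_cast (2 * n).factorial_pos
  have p2 : (0:ℝ) < (2 * n - 2 * j).factorial := by exact_mod_cast (2 * n - 2 * j).factorial_pos
  have p3 : (0:ℝ) < (2 * n - j).factorial := by exact_mod_cast (2 * n - j).factorial_pos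
  have p4 : (0:ℝ) < j.factorial := by exact_mod_cast j.factorial_pos
  have p5 : (4:ℝ) ^ n = 2 ^ (2 * n) := by rw [pow_mul]; norm_num
  rw [p5]
  field_simp
  try exact Or.inl trivial

lemma gaussPDF1_nonneg (σ x : ℝ) : 0 ≤ gaussPDF1 σ x := by
  unfold gaussPDF1; positivity

lemma integrable_pow_mul_gauss_shift {c : ℝ} (hc : 0 < c) (N : ℕ) (m : ℝ) :
    Integrable fun w : ℝ => w ^ N * gaussPDF1 c (w - m) := by
  have h : Integrable fun u : ℝ => (u + m) ^ N * gaussPDF1 c u := by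
    have e : ∀ u : ℝ, (u + m) ^ N * gaussPDF1 c u
        = ∑ i ∈ Finset.range (N + 1),
            (m ^ (N - i) * (N.choose i : ℝ)) * (u ^ i * gaussPDF1 c u) := by
      intro u
      rw [add_pow, Finset.sum_mul]
      exact Finset.sum_congr rfl fun i _ => by ring
    simp_rw [e]
    exact MeasureTheory.integrable_finset_sum _
      fun i _ => (integrable_pow_mul_gauss hc i).const_mul _
  have h2 := h.comp_sub_right m
  refine h2.congr (Filter.Eventually.of_forall fun w => ?_)
  simp

lemma gauss2_factor {σii σjj σij : ℝ} (hii : 0 < σii)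
    (hd : 0 < σii * σjj - σij ^ 2) (x w : ℝ) :
    gaussPDF2 σii σjj σij x w
      = gaussPDF1 σii x
        * gaussPDF1 ((σii * σjj - σij ^ 2) / σii) (w - (σij / σii) * x) := by
  set d := σii * σjj - σij ^ 2 with hdd
  have hc : 0 < d / σii := by positivity
  unfold gaussPDF2 gaussPDF1
  rw [show (1 / Real.sqrt (2 * π * σii)) * Real.exp (-x ^ 2 / (2 * σii))
      * ((1 / Real.sqrt (2 * π * (d / σii)))
        * Real.exp (-(w - σij / σii * x) ^ 2 / (2 * (d / σii))))
    = (1 / (Real.sqrt (2 * π * σii) * Real.sqrt (2 * π * (d / σii))))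
      * (Real.exp (-x ^ 2 / (2 * σii)) * Real.exp (-(w - σij / σii * x) ^ 2 / (2 * (d / σii))))
    by ring]
  rw [← Real.exp_add]
  congr 1
  · rw [← Real.sqrt_mul (by positivity)]
    rw [show 2 * π * σii * (2 * π * (d / σii)) = (2 * π) ^ 2 * d by field_simp]
    rw [Real.sqrt_mul (by positivity), Real.sqrt_sq (by positivity)]
  · congr 1
    rw [← hdd]
    field_simp
    ring

lemma transMean_even_pow {σ : ℝ} (hσ : 0 < σ) (n : ℕ) :
    transMean σ (fun x => x ^ (2 * n) / ((2 * n).factorial : ℝ))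
      = σ ^ n / (2 ^ n * n.factorial) := by
  unfold transMean
  have e : ∀ x : ℝ, (x ^ (2 * n) / ((2 * n).factorial : ℝ)) * gaussPDF1 σ x
      = (((2 * n).factorial : ℝ))⁻¹ * (x ^ (2 * n) * gaussPDF1 σ x) := fun x => by ring
  simp_rw [e]
  rw [MeasureTheory.integral_const_mul, gauss_moment_even hσ]
  have p1 : (0:ℝ) < (2 * n).factorial := by exact_mod_cast (2 * n).factorial_pos
  field_simp

lemma prod_integral {σii σjj σij : ℝ} (hii : 0 < σii) (hjj : 0 < σjj)
    (hd : 0 < σii * σjj - σij ^ 2) (n : ℕ) :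
    ∫ q : ℝ × ℝ, q.1 ^ (2 * n) * gaussPDF1 σii q.1 *
        (q.2 ^ (2 * n) * gaussPDF1 ((σii * σjj - σij ^ 2) / σii) (q.2 - σij / σii * q.1))
      = ∑ j ∈ Finset.range (n + 1),
          ((2 * n).choose (2 * j) : ℝ) * (σij / σii) ^ (2 * n - 2 * j)
            * (((σii * σjj - σij ^ 2) / σii) ^ j * (2 * j).factorial / (2 ^ j * j.factorial))
            * (σii ^ (2 * n - j) * (2 * (2 * n - j)).factorial
                / (2 ^ (2 * n - j) * (2 * n - j).factorial)) := by
  set c : ℝ := (σii * σjj - σij ^ 2) / σii with hcc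
  set a : ℝ := σij / σii with haa
  have hc : 0 < c := by rw [hcc]; positivity
  set P : ℝ → ℝ := fun x => ∑ j ∈ Finset.range (n + 1),
      ((2 * n).choose (2 * j) : ℝ) * a ^ (2 * n - 2 * j)
        * (c ^ j * (2 * j).factorial / (2 ^ j * j.factorial))
        * (x ^ (2 * (2 * n - j)) * gaussPDF1 σii x) with hP
  have hPval : ∀ x : ℝ,
      x ^ (2 * n) * gaussPDF1 σii x *
        ∑ j ∈ Finset.range (n + 1),
          ((2 * n).choose (2 * j) : ℝ) * (a * x) ^ (2 * n - 2 * j)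
            * (c ^ j * (2 * j).factorial / (2 ^ j * j.factorial)) = P x := by
    intro x
    rw [hP, Finset.mul_sum]
    refine Finset.sum_congr rfl fun j hj => ?_
    simp only [Finset.mem_range] at hj
    rw [mul_pow, show x ^ (2 * (2 * n - j)) = x ^ (2 * n) * x ^ (2 * n - 2 * j) by
      rw [← pow_add]; congr 1; omega]
    ring
  have hPint : Integrable P :=
    MeasureTheory.integrable_finset_sum _
      (fun j _ => (integrable_pow_mul_gauss hii (2 * (2 * n - j))).const_mul _)
  have hnn : ∀ x w : ℝ,
      0 ≤ x ^ (2 * n) * gaussPDF1 σii x * (w ^ (2 * n) * gaussPDF1 c (w - a * x)) := by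
    intro x w
    have h1 : 0 ≤ x ^ (2 * n) := (even_two_mul n).pow_nonneg x
    have h2 : 0 ≤ w ^ (2 * n) := (even_two_mul n).pow_nonneg w
    have := gaussPDF1_nonneg σii x
    have := gaussPDF1_nonneg c (w - a * x)
    positivity
  have hmeas : AEStronglyMeasurable
      (fun q : ℝ × ℝ => q.1 ^ (2 * n) * gaussPDF1 σii q.1 *
        (q.2 ^ (2 * n) * gaussPDF1 c (q.2 - a * q.1))) (volume : Measure (ℝ × ℝ)) := by
    apply Continuous.aestronglyMeasurable
    unfold gaussPDF1
    fun_prop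
  have hnormval : ∀ x : ℝ,
      (∫ w : ℝ, ‖x ^ (2 * n) * gaussPDF1 σii x * (w ^ (2 * n) * gaussPDF1 c (w - a * x))‖)
        = P x := by
    intro x
    have e : ∀ w : ℝ, ‖x ^ (2 * n) * gaussPDF1 σii x * (w ^ (2 * n) * gaussPDF1 c (w - a * x))‖
        = x ^ (2 * n) * gaussPDF1 σii x * (w ^ (2 * n) * gaussPDF1 c (w - a * x)) :=
      fun w => norm_of_nonneg (hnn x w)
    simp_rw [e, MeasureTheory.integral_const_mul, gauss_shift_moment hc n (a * x)]
    exact hPval x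
  have hIntF : Integrable
      (fun q : ℝ × ℝ => q.1 ^ (2 * n) * gaussPDF1 σii q.1 *
        (q.2 ^ (2 * n) * gaussPDF1 c (q.2 - a * q.1))) (volume : Measure (ℝ × ℝ)) := by
    rw [MeasureTheory.Measure.volume_eq_prod] at hmeas ⊢
    rw [MeasureTheory.integrable_prod_iff hmeas]
    constructor
    · exact Filter.Eventually.of_forall fun x => by
        simpa using (integrable_pow_mul_gauss_shift hc (2 * n) (a * x)).const_mul
          (x ^ (2 * n) * gaussPDF1 σii x)
    · exact hPint.congr (Filter.Eventually.of_forall fun x => by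
        simpa using (hnormval x).symm)
  rw [MeasureTheory.Measure.volume_eq_prod] at hIntF ⊢
  rw [MeasureTheory.integral_prod _ hIntF]
  have e2 : ∀ x : ℝ,
      (∫ w : ℝ, x ^ (2 * n) * gaussPDF1 σii x * (w ^ (2 * n) * gaussPDF1 c (w - a * x)))
        = P x := by
    intro x
    rw [MeasureTheory.integral_const_mul, gauss_shift_moment hc n (a * x)]
    exact hPval x
  rw [MeasureTheory.integral_congr_ae (Filter.Eventually.of_forall e2), hP,
    MeasureTheory.integral_finset_sum _
      (fun j _ => (integrable_pow_mul_gauss hii (2 * (2 * n - j))).const_mul _)]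
  refine Finset.sum_congr rfl fun j hj => ?_
  rw [MeasureTheory.integral_const_mul, gauss_moment_even hii (2 * n - j)]

theorem transformed_covariance_even_monomial
    (σii σjj σij : ℝ) (hii : 0 < σii) (hjj : 0 < σjj)
    (hd : 0 < σii * σjj - σij ^ 2) (n : ℕ) (hn : 1 ≤ n) :
    transCov σii σjj σij
        (fun x => x ^ (2 * n) / ((2 * n).factorial : ℝ))
        (fun x => x ^ (2 * n) / ((2 * n).factorial : ℝ)) =
      (σii ^ n * σjj ^ n / 2 ^ (2 * n)) *
        ∑ k ∈ Finset.Icc 1 n,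
          (1 / (((n - k).factorial : ℝ) ^ 2 * ((2 * k).factorial : ℝ))) *
            (4 * σij ^ 2 / (σii * σjj)) ^ k := by
  unfold transCov
  rw [transMean_even_pow hii n, transMean_even_pow hjj n]
  have e0 : (∫ q : ℝ × ℝ,
        (fun x => x ^ (2 * n) / ((2 * n).factorial : ℝ)) q.1 *
          (fun x => x ^ (2 * n) / ((2 * n).factorial : ℝ)) q.2 *
            gaussPDF2 σii σjj σij q.1 q.2)
      = (((2 * n).factorial : ℝ) ^ 2)⁻¹ *
          ∫ q : ℝ × ℝ, q.1 ^ (2 * n) * gaussPDF1 σii q.1 *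
            (q.2 ^ (2 * n) * gaussPDF1 ((σii * σjj - σij ^ 2) / σii)
              (q.2 - σij / σii * q.1)) := by
    rw [← MeasureTheory.integral_const_mul]
    refine MeasureTheory.integral_congr_ae (Filter.Eventually.of_forall fun q => ?_)
    simp only
    rw [gauss2_factor hii hd q.1 q.2]
    ring
  rw [e0, prod_integral hii hjj hd n, Finset.mul_sum]
  have e1 : ∀ j ∈ Finset.range (n + 1),
      (((2 * n).factorial : ℝ) ^ 2)⁻¹ *
        (((2 * n).choose (2 * j) : ℝ) * (σij / σii) ^ (2 * n - 2 * j)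
          * (((σii * σjj - σij ^ 2) / σii) ^ j * (2 * j).factorial / (2 ^ j * j.factorial))
          * (σii ^ (2 * n - j) * (2 * (2 * n - j)).factorial
              / (2 ^ (2 * n - j) * (2 * n - j).factorial)))
      = ((2 * (2 * n - j)).factorial : ℝ) /
            ((2 * n).factorial * (2 * n - 2 * j).factorial * j.factorial
              * (2 * n - j).factorial * 2 ^ (2 * n)) * (σij ^ 2) ^ (n - j)
          * (σii * σjj - σij ^ 2) ^ j := by
    intro j hj
    simp only [Finset.mem_range] at hj
    have h2j : 2 * j ≤ 2 * n := by omega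
    have hσii : σii ≠ 0 := ne_of_gt hii
    have f1 : (0:ℝ) < (2 * n).factorial := by exact_mod_cast (2 * n).factorial_pos
    have f2 : (0:ℝ) < (2 * n - 2 * j).factorial := by exact_mod_cast (2 * n - 2 * j).factorial_pos
    have f3 : (0:ℝ) < j.factorial := by exact_mod_cast j.factorial_pos
    have f4 : (0:ℝ) < (2 * n - j).factorial := by exact_mod_cast (2 * n - j).factorial_pos
    have f5 : (0:ℝ) < (2 * j).factorial := by exact_mod_cast (2 * j).factorial_pos
    have f6 : (0:ℝ) < (2 * (2 * n - j)).factorial := by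
      exact_mod_cast (2 * (2 * n - j)).factorial_pos
    rw [Nat.cast_choose ℝ h2j]
    have epow1 : ((σij ^ 2 : ℝ)) ^ (n - j) = σij ^ (2 * n - 2 * j) := by
      rw [← pow_mul]; congr 1; omega
    have epow2 : (σii : ℝ) ^ (2 * n - j) = σii ^ (2 * n - 2 * j) * σii ^ j := by
      rw [← pow_add]; congr 1; omega
    have epow3 : (2 : ℝ) ^ (2 * n) = 2 ^ j * 2 ^ (2 * n - j) := by
      rw [← pow_add]; congr 1; omega
    have epow4 : (σij / σii) ^ (2 * n - 2 * j) = σij ^ (2 * n - 2 * j) / σii ^ (2 * n - 2 * j) :=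
      div_pow σij σii _
    have epow5 : ((σii * σjj - σij ^ 2) / σii) ^ j
        = (σii * σjj - σij ^ 2) ^ j / σii ^ j := div_pow _ σii j
    rw [epow1, epow2, epow3, epow4, epow5]
    field_simp
  rw [Finset.sum_congr rfl e1,
    alg_main n (σii * σjj) (σij ^ 2) (σii * σjj - σij ^ 2) rfl]
  have hins : Finset.range (n + 1) = insert 0 (Finset.Icc 1 n) := by
    ext i
    simp only [Finset.mem_range, Finset.mem_insert, Finset.mem_Icc]
    omega
  rw [hins, Finset.sum_insert (by simp)]
  have h40 : (4:ℝ) ^ 0 / (4 ^ n * ((2 * 0).factorial : ℝ) * ((n - 0).factorial : ℝ) ^ 2)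
      * (σij ^ 2) ^ 0 * (σii * σjj) ^ (n - 0)
      = σii ^ n / (2 ^ n * n.factorial) * (σjj ^ n / (2 ^ n * n.factorial)) := by
    have fn : (0:ℝ) < n.factorial := by exact_mod_cast n.factorial_pos
    have h4n : (4:ℝ) ^ n = 2 ^ n * 2 ^ n := by
      rw [show (4:ℝ) = 2 * 2 by norm_num, mul_pow]
    simp only [pow_zero, Nat.mul_zero, Nat.sub_zero, Nat.factorial_zero, Nat.cast_one,
      mul_one, one_mul]
    rw [mul_pow, h4n]
    field_simp
  rw [h40, add_sub_cancel_left, Finset.mul_sum]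
  refine Finset.sum_congr rfl fun k hk => ?_
  simp only [Finset.mem_Icc] at hk
  have hkn : k ≤ n := hk.2
  have hS : (0:ℝ) < σii * σjj := by positivity
  have fk1 : (0:ℝ) < (2 * k).factorial := by exact_mod_cast (2 * k).factorial_pos
  have fk2 : (0:ℝ) < (n - k).factorial := by exact_mod_cast (n - k).factorial_pos
  have h4n : (2:ℝ) ^ (2 * n) = 4 ^ n := by
    rw [pow_mul]; norm_num
  have e2 : (σii * σjj) ^ (n - k) = σii ^ n * σjj ^ n / (σii * σjj) ^ k := by
    rw [eq_div_iff (pow_ne_zero _ (ne_of_gt hS)), ← pow_add, Nat.sub_add_cancel hkn, mul_pow]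
  rw [e2, show (4 * σij ^ 2 / (σii * σjj)) ^ k
      = 4 ^ k * (σij ^ 2) ^ k / (σii * σjj) ^ k by rw [div_pow, mul_pow], h4n]
  field_simp
end
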